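/- arXiv:1405.2973 — 7 statements merged into one kernel-verified Lean document; each statement's English description precedes it below -/
import Mathlib

section
/- For a simplex σ of dimension n linearly embedded in Euclidean space, the comesh of its barycentric subdivision satisfies comesh(Sd σ) ≥ rad(σ)/(n(n+1)), i.e., every positive-dimensional simplex of the barycentric subdivision has radius at least rad(σ)/(n(n+1)). -/
/-- The radius of a simplex with vertices `q`: the distance from its barycenter to its
boundary (the union of the convex hulls of the proper subsets of vertices). -/
noncomputable def simplexRad {E : Type*} [NormedAddCommGroup E] [NormedSpace ℝ E]
    {k : ℕ} (q : Fin (k + 1) → E) : ℝ :=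
  Metric.infDist (Finset.centroid ℝ Finset.univ q)
    (⋃ (s : Finset (Fin (k + 1))) (_ : s ≠ Finset.univ), convexHull ℝ (q '' ↑s))

open Finset Metric

section aux

variable {E : Type*} [NormedAddCommGroup E] [NormedSpace ℝ E]

lemma centroid_univ_eq {k : ℕ} (p : Fin (k + 1) → E) :
    Finset.centroid ℝ Finset.univ p = ∑ l, ((k : ℝ) + 1)⁻¹ • p l := by
  rw [Finset.centroid_def,
    Finset.affineCombination_eq_linear_combination _ _ _
      (Finset.sum_centroidWeights_eq_one_of_nonempty ℝ _ Finset.univ_nonempty)]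
  refine Finset.sum_congr rfl fun l _ => ?_
  congr 1
  rw [Finset.centroidWeights_apply, Finset.card_univ, Fintype.card_fin]
  push_cast
  ring

lemma crossing {k : ℕ} (p : Fin (k + 1) → E) (b : Fin (k + 1) → ℝ)
    (hb : ∑ l, b l = 1) (i0 : Fin (k + 1)) (hb0 : b i0 ≤ 0) :
    simplexRad p ≤ ‖(∑ l, ((k : ℝ) + 1)⁻¹ • p l) - ∑ l, b l • p l‖ := by
  classical
  set κ : ℝ := ((k : ℝ) + 1)⁻¹ with hκdef
  have hκpos : 0 < κ := by positivity
  set t : Fin (k + 1) → ℝ := fun l => if b l < κ then κ / (κ - b l) else 1 with htdef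
  have htpos : ∀ l, 0 < t l := by
    intro l
    rw [htdef]
    dsimp only
    split
    · have : b l < κ := by assumption
      exact div_pos hκpos (by linarith)
    · norm_num
  set T : ℝ := Finset.univ.inf' Finset.univ_nonempty t with hTdef
  have hTle : ∀ l, T ≤ t l := fun l => Finset.inf'_le _ (Finset.mem_univ l)
  have hTpos : 0 < T := by
    rw [hTdef, Finset.lt_inf'_iff]
    exact fun l _ => htpos l
  have hti0 : t i0 ≤ 1 := by
    rw [htdef]
    dsimp only
    rw [if_pos (lt_of_le_of_lt hb0 hκpos)]
    rw [div_le_one (by linarith)]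
    linarith
  have hT1 : T ≤ 1 := le_trans (hTle i0) hti0
  set c : Fin (k + 1) → ℝ := fun l => (1 - T) * κ + T * b l with hcdef
  have hcnn : ∀ l, 0 ≤ c l := by
    intro l
    rw [hcdef]
    dsimp only
    by_cases h : b l < κ
    · have h1 : T * (κ - b l) ≤ t l * (κ - b l) :=
        mul_le_mul_of_nonneg_right (hTle l) (by linarith)
      have h2 : t l * (κ - b l) = κ := by
        rw [htdef]
        dsimp only
        rw [if_pos h]
        exact div_mul_cancel₀ κ (by linarith)
      nlinarith
    · push_neg at h
      nlinarith
  have hcsum : ∑ l, c l = 1 := by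
    rw [hcdef]
    dsimp only
    rw [Finset.sum_add_distrib, Finset.sum_const, ← Finset.mul_sum, hb, Finset.card_univ,
      Fintype.card_fin, nsmul_eq_mul]
    have hκ1 : ((k : ℝ) + 1) * κ = 1 := mul_inv_cancel₀ (by positivity)
    push_cast
    nlinarith
  have hex : ∃ m, c m = 0 := by
    obtain ⟨l0, -, hl0⟩ := Finset.exists_mem_eq_inf' (Finset.univ_nonempty) t
    by_cases h : b l0 < κ
    · refine ⟨l0, ?_⟩
      have hT : T = κ / (κ - b l0) := by
        rw [hTdef, hl0, htdef]
        dsimp only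
        rw [if_pos h]
      have hne : κ - b l0 ≠ 0 := by
        have hlt : b l0 < κ := h
        intro hc0; linarith
      rw [hcdef]
      dsimp only
      rw [hT]
      field_simp
      ring
    · refine ⟨i0, ?_⟩
      have hT : T = 1 := by
        rw [hTdef, hl0, htdef]
        dsimp only
        rw [if_neg h]
      have hci0 : c i0 = b i0 := by
        rw [hcdef]
        dsimp only
        rw [hT]
        ring
      have := hcnn i0
      linarith [hci0 ▸ this, hb0]
  obtain ⟨l0, hl0z⟩ := hex
  set x : E := ∑ l, c l • p l with hxdef
  have hxer : x = ∑ l ∈ Finset.univ.erase l0, c l • p l := by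
    rw [hxdef]
    exact (Finset.sum_erase _ (by rw [hl0z, zero_smul])).symm
  have hsumer : ∑ l ∈ Finset.univ.erase l0, c l = 1 := by
    rw [Finset.sum_erase _ hl0z, hcsum]
  have hxmem : x ∈ ⋃ (s : Finset (Fin (k + 1))) (_ : s ≠ Finset.univ), convexHull ℝ (p '' ↑s) := by
    have hne : (Finset.univ.erase l0) ≠ Finset.univ := by
      intro h
      have hmem := Finset.mem_univ l0
      rw [← h] at hmem
      exact Finset.notMem_erase l0 Finset.univ hmem
    refine Set.mem_iUnion.2 ⟨Finset.univ.erase l0, Set.mem_iUnion.2 ⟨hne, ?_⟩⟩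
    have := Finset.centerMass_mem_convexHull (Finset.univ.erase l0)
      (fun i _ => hcnn i) (by rw [hsumer]; norm_num)
      (fun i hi => Set.mem_image_of_mem p (Finset.mem_coe.2 hi))
    rwa [Finset.centerMass_eq_of_sum_1 _ _ hsumer, ← hxer] at this
  have hdiff : (∑ l, κ • p l) - x = T • ((∑ l, κ • p l) - ∑ l, b l • p l) := by
    rw [hxdef, smul_sub, Finset.smul_sum, Finset.smul_sum, ← Finset.sum_sub_distrib,
      ← Finset.sum_sub_distrib]
    refine Finset.sum_congr rfl fun l _ => ?_
    rw [smul_smul, smul_smul, ← sub_smul, ← sub_smul, hcdef]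
    congr 1
    ring
  have hle : simplexRad p ≤ dist (Finset.centroid ℝ Finset.univ p) x :=
    Metric.infDist_le_dist_of_mem hxmem
  rw [dist_eq_norm, centroid_univ_eq, ← hκdef] at hle
  calc simplexRad p ≤ ‖(∑ l, κ • p l) - x‖ := hle
    _ = ‖T‖ * ‖(∑ l, κ • p l) - ∑ l, b l • p l‖ := by rw [hdiff, norm_smul]
    _ ≤ 1 * ‖(∑ l, κ • p l) - ∑ l, b l • p l‖ := by
        apply mul_le_mul_of_nonneg_right _ (norm_nonneg _)
        rw [Real.norm_eq_abs, abs_of_pos hTpos]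
        exact hT1
    _ = ‖(∑ l, κ • p l) - ∑ l, b l • p l‖ := one_mul _

lemma simplexRad_nonneg {k : ℕ} (p : Fin (k + 1) → E) : 0 ≤ simplexRad p :=
  Metric.infDist_nonneg

lemma coord_lip_aux {k : ℕ} (p : Fin (k + 1) → E) (a b : Fin (k + 1) → ℝ)
    (ha : ∑ l, a l = 1) (hb : ∑ l, b l = 1) (i : Fin (k + 1)) (hi : b i < a i) :
    ((k : ℝ) + 1) * simplexRad p * (a i - b i) ≤ ‖(∑ l, a l • p l) - ∑ l, b l • p l‖ := by
  set κ : ℝ := ((k : ℝ) + 1)⁻¹ with hκdef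
  have hκpos : 0 < κ := by positivity
  set δ : ℝ := a i - b i with hδdef
  have hδpos : 0 < δ := by rw [hδdef]; linarith
  set e : Fin (k + 1) → ℝ := fun l => κ - (κ / δ) * (a l - b l) with hedef
  have hesum : ∑ l, e l = 1 := by
    rw [hedef]
    dsimp only
    rw [Finset.sum_sub_distrib, Finset.sum_const, ← Finset.mul_sum, Finset.sum_sub_distrib,
      ha, hb, Finset.card_univ, Fintype.card_fin, nsmul_eq_mul]
    have hκ1 : ((k : ℝ) + 1) * κ = 1 := mul_inv_cancel₀ (by positivity)
    push_cast
    nlinarith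
  have hei : e i ≤ 0 := by
    rw [hedef]
    dsimp only
    rw [← hδdef]
    field_simp
    simp
  have hcr := crossing p e hesum i hei
  have hdiff : (∑ l, ((k : ℝ) + 1)⁻¹ • p l) - ∑ l, e l • p l
      = (κ / δ) • ((∑ l, a l • p l) - ∑ l, b l • p l) := by
    rw [smul_sub, Finset.smul_sum, Finset.smul_sum, ← Finset.sum_sub_distrib,
      ← Finset.sum_sub_distrib]
    refine Finset.sum_congr rfl fun l _ => ?_
    rw [smul_smul, smul_smul, ← sub_smul, ← sub_smul, hedef]
    congr 1
    rw [← hκdef]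
    ring
  rw [hdiff, norm_smul, Real.norm_eq_abs, abs_of_pos (div_pos hκpos hδpos)] at hcr
  have hκ1 : ((k : ℝ) + 1) * κ = 1 := mul_inv_cancel₀ (by positivity)
  have h2 : simplexRad p * δ ≤ κ * ‖(∑ l, a l • p l) - ∑ l, b l • p l‖ := by
    have h3 := mul_le_mul_of_nonneg_right hcr (le_of_lt hδpos)
    calc simplexRad p * δ ≤ κ / δ * ‖(∑ l, a l • p l) - ∑ l, b l • p l‖ * δ := h3
      _ = κ * ‖(∑ l, a l • p l) - ∑ l, b l • p l‖ := by
          field_simp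
  calc ((k : ℝ) + 1) * simplexRad p * δ = ((k : ℝ) + 1) * (simplexRad p * δ) := by ring
    _ ≤ ((k : ℝ) + 1) * (κ * ‖(∑ l, a l • p l) - ∑ l, b l • p l‖) := by
        apply mul_le_mul_of_nonneg_left h2 (by positivity)
    _ = (((k : ℝ) + 1) * κ) * ‖(∑ l, a l • p l) - ∑ l, b l • p l‖ := by ring
    _ = ‖(∑ l, a l • p l) - ∑ l, b l • p l‖ := by rw [hκ1, one_mul]

lemma coord_lip {k : ℕ} (p : Fin (k + 1) → E) (a b : Fin (k + 1) → ℝ)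
    (ha : ∑ l, a l = 1) (hb : ∑ l, b l = 1) (i : Fin (k + 1)) :
    ((k : ℝ) + 1) * simplexRad p * |a i - b i| ≤ ‖(∑ l, a l • p l) - ∑ l, b l • p l‖ := by
  rcases lt_trichotomy (b i) (a i) with h | h | h
  · rw [abs_of_pos (by linarith)]
    exact coord_lip_aux p a b ha hb i h
  · rw [h, sub_self, abs_zero, mul_zero]
    exact norm_nonneg _
  · rw [abs_of_neg (by linarith), neg_sub, norm_sub_rev]
    exact coord_lip_aux p b a hb ha i h

lemma weighted_lip {k : ℕ} (p : Fin (k + 1) → E) (a b : Fin (k + 1) → ℝ)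
    (ha : ∑ l, a l = 1) (hb : ∑ l, b l = 1) (d : Fin (k + 1) → ℝ) (c : ℝ) :
    ((k : ℝ) + 1) * simplexRad p * |∑ l, (a l - b l) * d l|
      ≤ (∑ l, |d l - c|) * ‖(∑ l, a l • p l) - ∑ l, b l • p l‖ := by
  have hzero : ∑ l, (a l - b l) = 0 := by
    rw [Finset.sum_sub_distrib, ha, hb, sub_self]
  have key : ∑ l, (a l - b l) * d l = ∑ l, (a l - b l) * (d l - c) := by
    have : ∑ l, (a l - b l) * (d l - c) = ∑ l, (a l - b l) * d l - c * ∑ l, (a l - b l) := by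
      rw [Finset.mul_sum, ← Finset.sum_sub_distrib]
      exact Finset.sum_congr rfl fun l _ => by ring
    rw [this, hzero, mul_zero, sub_zero]
  have hr0 : 0 ≤ simplexRad p := simplexRad_nonneg p
  rw [key]
  calc ((k : ℝ) + 1) * simplexRad p * |∑ l, (a l - b l) * (d l - c)|
      ≤ ((k : ℝ) + 1) * simplexRad p * ∑ l, |(a l - b l) * (d l - c)| := by
        apply mul_le_mul_of_nonneg_left (Finset.abs_sum_le_sum_abs _ _) (by positivity)
    _ = ∑ l, |d l - c| * (((k : ℝ) + 1) * simplexRad p * |a l - b l|) := by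
        rw [Finset.mul_sum]
        exact Finset.sum_congr rfl fun l _ => by rw [abs_mul]; ring
    _ ≤ ∑ l, |d l - c| * ‖(∑ l, a l • p l) - ∑ l, b l • p l‖ := by
        exact Finset.sum_le_sum fun l _ =>
          mul_le_mul_of_nonneg_left (coord_lip p a b ha hb l) (abs_nonneg _)
    _ = (∑ l, |d l - c|) * ‖(∑ l, a l • p l) - ∑ l, b l • p l‖ := by
        rw [Finset.sum_mul]

end aux

lemma arith1 (r D bR P nR : ℝ) (hr : 0 ≤ r) (hD : 0 ≤ D) (hP : 1 ≤ P) (hb0 : 0 < bR)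
    (hb : bR ≤ nR) (hn : 1 ≤ nR) (hM : r * (bR⁻¹ * P) ≤ 2 * P * D) :
    r / (nR * (nR + 1)) ≤ D := by
  have hP0 : (0 : ℝ) < P := by linarith
  have h5 : r * P ≤ 2 * P * D * bR := by
    have h3 := mul_le_mul_of_nonneg_right hM (le_of_lt hb0)
    calc r * P = r * (bR⁻¹ * P) * bR := by field_simp
      _ ≤ 2 * P * D * bR := h3
  have h6 : r ≤ 2 * D * bR := by
    by_contra hcc
    push_neg at hcc
    nlinarith
  rw [div_le_iff₀ (by nlinarith : (0 : ℝ) < nR * (nR + 1))]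
  nlinarith [mul_nonneg hD (sub_nonneg.2 hb), mul_nonneg hD (by nlinarith : (0 : ℝ) ≤ nR * (nR - 1))]

lemma arith2 (r D bR aR nR : ℝ) (hr : 0 ≤ r) (hD : 0 ≤ D) (h1 : 1 ≤ aR)
    (h2 : aR + 1 ≤ bR) (hb : bR ≤ nR + 1) (hn : 1 ≤ nR)
    (hM : r * (bR⁻¹ * (bR - aR)) ≤ (nR + 1 - aR) * D) :
    r / (nR * (nR + 1)) ≤ D := by
  have hb0 : (0 : ℝ) < bR := by linarith
  have h5 : r * (bR - aR) ≤ (nR + 1 - aR) * D * bR := by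
    have h3 := mul_le_mul_of_nonneg_right hM (le_of_lt hb0)
    calc r * (bR - aR) = r * (bR⁻¹ * (bR - aR)) * bR := by field_simp
      _ ≤ (nR + 1 - aR) * D * bR := h3
  have h6 : r ≤ r * (bR - aR) := by nlinarith
  have hDb : (0 : ℝ) ≤ D * bR := mul_nonneg hD (by linarith)
  have h7 : (nR + 1 - aR) * D * bR ≤ nR * (D * bR) := by nlinarith
  have h8 : nR * (D * bR) ≤ nR * D * (nR + 1) := by nlinarith [mul_nonneg (mul_nonneg hD (by linarith : (0:ℝ) ≤ nR)) (by linarith : (0:ℝ) ≤ nR + 1 - bR)]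
  rw [div_le_iff₀ (by nlinarith : (0 : ℝ) < nR * (nR + 1))]
  nlinarith


set_option maxHeartbeats 2000000 in
/-- For a simplex σ of dimension n linearly embedded in Euclidean space,
every positive-dimensional simplex of the barycentric subdivision (spanned by the
barycenters of a strict chain of faces of σ) has radius at least rad(σ)/(n(n+1)). -/
theorem stmt2 (N n : ℕ) (hn : 1 ≤ n) (p : Fin (n + 1) → EuclideanSpace ℝ (Fin N))
    (hp : AffineIndependent ℝ p)
    (k : ℕ) (hk : 1 ≤ k) (S : Fin (k + 1) → Finset (Fin (n + 1)))
    (hS : StrictMono S) (hSne : ∀ j, (S j).Nonempty) :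
    simplexRad p / ((n : ℝ) * ((n : ℝ) + 1)) ≤
      simplexRad (fun j => Finset.centroid ℝ (S j) p) := by
  classical
  set q : Fin (k + 1) → EuclideanSpace ℝ (Fin N) := fun j => Finset.centroid ℝ (S j) p
    with hqdef
  have hr0 : 0 ≤ simplexRad p := simplexRad_nonneg p
  have hn1 : (1 : ℝ) ≤ (n : ℝ) := by exact_mod_cast hn
  have hg : (0 : ℝ) < (n : ℝ) * ((n : ℝ) + 1) := by nlinarith
  set μ : Fin (k + 1) → Fin (n + 1) → ℝ :=
    fun j l => if l ∈ S j then ((S j).card : ℝ)⁻¹ else 0 with hμdef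
  have hcard_pos : ∀ j, 0 < (S j).card := fun j => Finset.card_pos.2 (hSne j)
  have hμsum : ∀ j, ∑ l, μ j l = 1 := by
    intro j
    simp only [hμdef]
    rw [Finset.sum_ite_mem, Finset.univ_inter, Finset.sum_const, nsmul_eq_mul]
    exact mul_inv_cancel₀ (by exact_mod_cast (hcard_pos j).ne')
  have hqeq : ∀ j, q j = ∑ l, μ j l • p l := by
    intro j
    have h1 : q j = ∑ l ∈ S j, ((S j).card : ℝ)⁻¹ • p l := by
      simp only [hqdef]
      rw [Finset.centroid_def, Finset.affineCombination_eq_linear_combination _ _ _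
        (Finset.sum_centroidWeights_eq_one_of_nonempty ℝ _ (hSne j))]
      exact Finset.sum_congr rfl fun l _ => by rw [Finset.centroidWeights_apply]
    have h2 : ∑ l, μ j l • p l = ∑ l ∈ S j, ((S j).card : ℝ)⁻¹ • p l := by
      simp only [hμdef]
      have e1 : ∀ l : Fin (n + 1), (if l ∈ S j then ((S j).card : ℝ)⁻¹ else 0) • p l
          = if l ∈ S j then ((S j).card : ℝ)⁻¹ • p l else 0 := by
        intro l; split <;> simp
      rw [Finset.sum_congr rfl fun l _ => e1 l, Finset.sum_ite_mem, Finset.univ_inter]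
    rw [h1, h2]
  have hμd : ∀ (i : Fin (k + 1)) (d : Fin (n + 1) → ℝ),
      ∑ l, μ i l * d l = ((S i).card : ℝ)⁻¹ * ∑ l ∈ S i, d l := by
    intro i d
    simp only [hμdef]
    have e1 : ∀ l : Fin (n + 1), (if l ∈ S i then ((S i).card : ℝ)⁻¹ else 0) * d l
        = if l ∈ S i then ((S i).card : ℝ)⁻¹ * d l else 0 := by
      intro l; split <;> simp
    rw [Finset.sum_congr rfl fun l _ => e1 l, Finset.sum_ite_mem, Finset.univ_inter,
      ← Finset.mul_sum]
  set w : Fin (n + 1) → ℝ := fun l => ∑ j, ((k : ℝ) + 1)⁻¹ * μ j l with hwdef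
  have hwsum : ∑ l, w l = 1 := by
    simp only [hwdef]
    rw [Finset.sum_comm]
    rw [Finset.sum_congr rfl fun j (_ : j ∈ Finset.univ) => by
      rw [← Finset.mul_sum, hμsum j, mul_one]]
    rw [Finset.sum_const, Finset.card_univ, Fintype.card_fin, nsmul_eq_mul]
    push_cast
    exact mul_inv_cancel₀ (by positivity)
  have hcq : Finset.centroid ℝ Finset.univ q = ∑ l, w l • p l := by
    rw [centroid_univ_eq q]
    rw [Finset.sum_congr rfl fun j (_ : j ∈ Finset.univ) => by
      rw [hqeq j, Finset.smul_sum]]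
    rw [Finset.sum_comm]
    refine Finset.sum_congr rfl fun l _ => ?_
    simp only [hwdef]
    rw [Finset.sum_smul]
    exact Finset.sum_congr rfl fun j _ => smul_smul _ _ _
  have hmono : Monotone S := hS.monotone
  have hcard_lt : ∀ {i j' : Fin (k + 1)}, i < j' → (S i).card < (S j').card :=
    fun h => Finset.card_lt_card (hS h)
  have hcard_le : ∀ i : Fin (k + 1), (S i).card ≤ n + 1 := by
    intro i
    calc (S i).card ≤ (Finset.univ : Finset (Fin (n + 1))).card :=
          Finset.card_le_card (Finset.subset_univ _)
      _ = n + 1 := by rw [Finset.card_univ, Fintype.card_fin]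
  have hcard_ge : ∀ m : ℕ, ∀ hm : m < k + 1, m + 1 ≤ (S ⟨m, hm⟩).card := by
    intro m
    induction m with
    | zero => intro hm; exact hcard_pos _
    | succ m ih =>
      intro hm
      have h1 := ih (by omega)
      have h2 : (⟨m, by omega⟩ : Fin (k + 1)) < ⟨m + 1, hm⟩ := by
        rw [Fin.lt_def]; exact Nat.lt_succ_self _
      have := hcard_lt h2
      omega
  have hkn : k ≤ n := by
    have h1 := hcard_ge k (by omega)
    have h2 := hcard_le ⟨k, by omega⟩
    omega
  have hUne : (⋃ (s : Finset (Fin (k + 1))) (_ : s ≠ Finset.univ),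
      convexHull ℝ (q '' ↑s)).Nonempty := by
    refine ⟨q 0, Set.mem_iUnion.2 ⟨{0}, Set.mem_iUnion.2 ⟨?_, subset_convexHull ℝ _ ?_⟩⟩⟩
    · intro h
      have h1 : Fin.last k ∈ ({0} : Finset (Fin (k + 1))) := h ▸ Finset.mem_univ _
      rw [Finset.mem_singleton] at h1
      have h2 := congrArg Fin.val h1
      simp [Fin.last] at h2
      omega
    · exact ⟨0, by simp, rfl⟩
  have hmain : ∀ x ∈ ⋃ (s : Finset (Fin (k + 1))) (_ : s ≠ Finset.univ),
      convexHull ℝ (q '' ↑s),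
      simplexRad p / ((n : ℝ) * ((n : ℝ) + 1)) ≤ dist (Finset.centroid ℝ Finset.univ q) x := by
    intro x hx
    rw [Set.mem_iUnion] at hx
    obtain ⟨s, hx⟩ := hx
    rw [Set.mem_iUnion] at hx
    obtain ⟨hs, hx⟩ := hx
    obtain ⟨j, hj⟩ : ∃ j : Fin (k + 1), j ∉ s := by
      by_contra hco
      push_neg at hco
      exact hs (Finset.eq_univ_iff_forall.2 hco)
    rw [_root_.convexHull_eq] at hx
    obtain ⟨ι, t, wt, z, hw0, hw1, hz, hzx⟩ := hx
    have hz' : ∀ i ∈ t, ∃ m : Fin (k + 1), m ∈ s ∧ q m = z i := by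
      intro i hi
      rcases hz i hi with ⟨m, hm, hqm⟩
      exact ⟨m, Finset.mem_coe.1 hm, hqm⟩
    choose! g hg1 hg2 using hz'
    set b : Fin (n + 1) → ℝ := fun l => ∑ i ∈ t, wt i * μ (g i) l with hbdef
    have hbsum : ∑ l, b l = 1 := by
      simp only [hbdef]
      rw [Finset.sum_comm]
      rw [Finset.sum_congr rfl fun i (hi : i ∈ t) => by
        rw [← Finset.mul_sum, hμsum (g i), mul_one]]
      exact hw1
    have hxeq : x = ∑ l, b l • p l := by
      rw [← hzx, Finset.centerMass_eq_of_sum_1 _ _ hw1]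
      rw [Finset.sum_congr rfl fun i (hi : i ∈ t) => by
        rw [← hg2 i hi, hqeq (g i), Finset.smul_sum]]
      rw [Finset.sum_comm]
      refine Finset.sum_congr rfl fun l _ => ?_
      simp only [hbdef]
      rw [Finset.sum_smul]
      exact Finset.sum_congr rfl fun i _ => smul_smul _ _ _
    have hdist0 : 0 ≤ dist (Finset.centroid ℝ Finset.univ q) x := dist_nonneg
    have master : ∀ (d : Fin (n + 1) → ℝ) (c0 : ℝ),
        (∀ i : Fin (k + 1), i ≠ j → ∑ l, μ i l * d l = 0) →
        simplexRad p * |∑ l, μ j l * d l|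
          ≤ (∑ l, |d l - c0|) * dist (Finset.centroid ℝ Finset.univ q) x := by
      intro d c0 hv0
      have hwl := weighted_lip p w b hwsum hbsum d c0
      rw [← hcq, ← hxeq, ← dist_eq_norm] at hwl
      have hsw : ∑ l, w l * d l = ((k : ℝ) + 1)⁻¹ * ∑ l, μ j l * d l := by
        have e1 : ∀ l : Fin (n + 1), w l * d l
            = ∑ j' : Fin (k + 1), ((k : ℝ) + 1)⁻¹ * (μ j' l * d l) := by
          intro l
          simp only [hwdef]
          rw [Finset.sum_mul]
          exact Finset.sum_congr rfl fun j' _ => by ring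
        rw [Finset.sum_congr rfl fun l _ => e1 l, Finset.sum_comm]
        rw [Finset.sum_congr rfl fun j' (_ : j' ∈ Finset.univ) =>
          (Finset.mul_sum _ _ _).symm]
        rw [Finset.sum_eq_single j (fun j' _ hne => by rw [hv0 j' hne, mul_zero])
          (fun h => absurd (Finset.mem_univ j) h)]
      have hsb : ∑ l, b l * d l = 0 := by
        have e1 : ∀ l : Fin (n + 1), b l * d l = ∑ i ∈ t, wt i * (μ (g i) l * d l) := by
          intro l
          simp only [hbdef]
          rw [Finset.sum_mul]
          exact Finset.sum_congr rfl fun i _ => by ring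
        rw [Finset.sum_congr rfl fun l _ => e1 l, Finset.sum_comm]
        rw [Finset.sum_congr rfl fun i (hi : i ∈ t) => (Finset.mul_sum _ _ _).symm]
        apply Finset.sum_eq_zero
        intro i hi
        have hne : g i ≠ j := fun h => hj (h ▸ hg1 i hi)
        rw [hv0 (g i) hne, mul_zero]
      have hdiffsum : ∑ l, (w l - b l) * d l = ((k : ℝ) + 1)⁻¹ * ∑ l, μ j l * d l := by
        rw [Finset.sum_congr rfl fun l (_ : l ∈ Finset.univ) => sub_mul (w l) (b l) (d l)]
        rw [Finset.sum_sub_distrib, hsw, hsb, sub_zero]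
      rw [hdiffsum] at hwl
      have hκτ : |((k : ℝ) + 1)⁻¹ * ∑ l, μ j l * d l|
          = ((k : ℝ) + 1)⁻¹ * |∑ l, μ j l * d l| := by
        rw [abs_mul, abs_of_pos (by positivity)]
      rw [hκτ] at hwl
      have h1 : (1 : ℝ) ≤ ((n : ℝ) + 1) * ((k : ℝ) + 1)⁻¹ := by
        rw [← div_eq_mul_inv, le_div_iff₀ (by positivity)]
        have : (k : ℝ) ≤ (n : ℝ) := by exact_mod_cast hkn
        linarith
      nlinarith [hwl, mul_nonneg hr0 (abs_nonneg (∑ l, μ j l * d l)), h1]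
    rcases lt_or_eq_of_le (Nat.lt_succ_iff.mp j.isLt) with hjk | hjk
    · -- case (j : ℕ) < k
      obtain ⟨jp, hjpv⟩ : ∃ jp : Fin (k + 1), (jp : ℕ) = (j : ℕ) + 1 :=
        ⟨⟨(j : ℕ) + 1, by omega⟩, rfl⟩
      have hBC : S j ⊂ S jp := hS (by rw [Fin.lt_def, hjpv]; omega)
      have hCsub : ∀ i : Fin (k + 1), j < i → S jp ⊆ S i := by
        intro i hi
        apply hmono
        rw [Fin.le_def, hjpv]
        rw [Fin.lt_def] at hi
        omega
      obtain ⟨A, hAB, hAsub⟩ : ∃ A : Finset (Fin (n + 1)),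
          A ⊂ S j ∧ ∀ i : Fin (k + 1), i < j → S i ⊆ A := by
        by_cases h0 : (j : ℕ) = 0
        · refine ⟨∅, Finset.empty_ssubset.2 (hSne j), fun i hi => absurd hi ?_⟩
          rw [Fin.lt_def, h0]
          omega
        · refine ⟨S ⟨(j : ℕ) - 1, by omega⟩, hS (by rw [Fin.lt_def]; simp only [Fin.val_mk]; omega),
            fun i hi => hmono ?_⟩
          rw [Fin.le_def]
          rw [Fin.lt_def] at hi
          simp
          omega
      have hab : A.card < (S j).card := Finset.card_lt_card hAB
      have hbc : (S j).card < (S jp).card := Finset.card_lt_card hBC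
      set d : Fin (n + 1) → ℝ := fun l =>
        (((S jp).card : ℝ) - ((S j).card : ℝ)) * (if l ∈ S j \ A then 1 else 0)
        + ((A.card : ℝ) - ((S j).card : ℝ)) * (if l ∈ S jp \ S j then 1 else 0) with hddef
      have hdsum : ∀ u : Finset (Fin (n + 1)), ∑ l ∈ u, d l
          = (((S jp).card : ℝ) - ((S j).card : ℝ)) * ((u ∩ (S j \ A)).card : ℝ)
            + ((A.card : ℝ) - ((S j).card : ℝ)) * ((u ∩ (S jp \ S j)).card : ℝ) := by
        intro u
        simp only [hddef]
        rw [Finset.sum_add_distrib, ← Finset.mul_sum, ← Finset.mul_sum,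
          Finset.sum_boole, Finset.sum_boole, Finset.filter_mem_eq_inter,
          Finset.filter_mem_eq_inter]
      have hvlt : ∀ i : Fin (k + 1), i < j → ∑ l, μ i l * d l = 0 := by
        intro i hi
        rw [hμd i d, hdsum (S i)]
        have h1 : S i ∩ (S j \ A) = ∅ := by
          apply Finset.eq_empty_of_forall_notMem
          intro l hl
          rw [Finset.mem_inter, Finset.mem_sdiff] at hl
          exact hl.2.2 (hAsub i hi hl.1)
        have h2 : S i ∩ (S jp \ S j) = ∅ := by
          apply Finset.eq_empty_of_forall_notMem
          intro l hl
          rw [Finset.mem_inter, Finset.mem_sdiff] at hl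
          exact hl.2.2 (hAB.subset (hAsub i hi hl.1))
        rw [h1, h2]
        simp
      have hvgt : ∀ i : Fin (k + 1), j < i → ∑ l, μ i l * d l = 0 := by
        intro i hi
        rw [hμd i d, hdsum (S i)]
        have hsub1 : S j \ A ⊆ S i := fun l hl =>
          (hCsub i hi) (hBC.subset (Finset.mem_sdiff.1 hl).1)
        have hsub2 : S jp \ S j ⊆ S i := fun l hl =>
          (hCsub i hi) (Finset.mem_sdiff.1 hl).1
        rw [Finset.inter_eq_right.2 hsub1, Finset.inter_eq_right.2 hsub2]
        rw [Finset.card_sdiff_of_subset hAB.subset, Finset.card_sdiff_of_subset hBC.subset]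
        rw [Nat.cast_sub (Finset.card_le_card hAB.subset),
          Nat.cast_sub (Finset.card_le_card hBC.subset)]
        ring
      have hvj0 : ∀ i : Fin (k + 1), i ≠ j → ∑ l, μ i l * d l = 0 := by
        intro i hi
        rcases lt_or_gt_of_ne hi with h | h
        · exact hvlt i h
        · exact hvgt i h
      have hvj : ∑ l, μ j l * d l = ((S j).card : ℝ)⁻¹
          * ((((S jp).card : ℝ) - ((S j).card : ℝ)) * (((S j).card : ℝ) - (A.card : ℝ))) := by
        rw [hμd j d, hdsum (S j)]
        have h1 : S j ∩ (S j \ A) = S j \ A := Finset.inter_eq_right.2 Finset.sdiff_subset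
        have h2 : S j ∩ (S jp \ S j) = ∅ := by
          apply Finset.eq_empty_of_forall_notMem
          intro l hl
          rw [Finset.mem_inter, Finset.mem_sdiff] at hl
          exact hl.2.2 hl.1
        rw [h1, h2, Finset.card_sdiff_of_subset hAB.subset,
          Nat.cast_sub (Finset.card_le_card hAB.subset)]
        simp
      have hcb : ((S j).card : ℝ) ≤ ((S jp).card : ℝ) := by exact_mod_cast le_of_lt hbc
      have hba : (A.card : ℝ) ≤ ((S j).card : ℝ) := by exact_mod_cast le_of_lt hab
      have habs : ∑ l, |d l - 0|
          = 2 * ((((S jp).card : ℝ) - ((S j).card : ℝ)) * (((S j).card : ℝ) - (A.card : ℝ))) := by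
        have e1 : ∀ l : Fin (n + 1), |d l - 0|
            = (((S jp).card : ℝ) - ((S j).card : ℝ)) * (if l ∈ S j \ A then 1 else 0)
              + (((S j).card : ℝ) - (A.card : ℝ)) * (if l ∈ S jp \ S j then 1 else 0) := by
          intro l
          rw [sub_zero]
          simp only [hddef]
          by_cases h1 : l ∈ S j \ A
          · have h2 : l ∉ S jp \ S j := by
              rw [Finset.mem_sdiff] at h1 ⊢
              intro hcon2
              exact hcon2.2 h1.1
            simp only [if_pos h1, if_neg h2, mul_one, mul_zero, add_zero]
            exact abs_of_nonneg (by linarith)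
          · by_cases h2 : l ∈ S jp \ S j
            · simp only [if_pos h2, if_neg h1, mul_one, mul_zero, zero_add]
              rw [abs_of_nonpos (by linarith)]
              ring
            · simp only [if_neg h1, if_neg h2, mul_zero, add_zero]
              exact abs_zero
        rw [Finset.sum_congr rfl fun l _ => e1 l]
        rw [Finset.sum_add_distrib, ← Finset.mul_sum, ← Finset.mul_sum,
          Finset.sum_boole, Finset.sum_boole, Finset.filter_mem_eq_inter,
          Finset.filter_mem_eq_inter, Finset.univ_inter, Finset.univ_inter,
          Finset.card_sdiff_of_subset hAB.subset, Finset.card_sdiff_of_subset hBC.subset,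
          Nat.cast_sub (Finset.card_le_card hAB.subset),
          Nat.cast_sub (Finset.card_le_card hBC.subset)]
        ring
      have hM := master d 0 hvj0
      rw [hvj, habs] at hM
      have hb_pos : (0 : ℝ) < ((S j).card : ℝ) := by exact_mod_cast hcard_pos j
      have hb_le : ((S j).card : ℝ) ≤ (n : ℝ) := by
        have h2 := hcard_le jp
        have : (S j).card ≤ n := by omega
        exact_mod_cast this
      have hP1 : (1 : ℝ) ≤ ((S jp).card : ℝ) - ((S j).card : ℝ) := by
        have : (S j).card + 1 ≤ (S jp).card := hbc
        have h2 : (((S j).card : ℝ)) + 1 ≤ ((S jp).card : ℝ) := by exact_mod_cast this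
        linarith
      have hP2 : (1 : ℝ) ≤ ((S j).card : ℝ) - (A.card : ℝ) := by
        have : A.card + 1 ≤ (S j).card := hab
        have h2 : ((A.card : ℝ)) + 1 ≤ ((S j).card : ℝ) := by exact_mod_cast this
        linarith
      rw [abs_of_nonneg (mul_nonneg (by positivity)
        (mul_nonneg (by linarith) (by linarith)))] at hM
      exact arith1 (simplexRad p) (dist (Finset.centroid ℝ Finset.univ q) x)
        ((S j).card : ℝ) ((((S jp).card : ℝ) - ((S j).card : ℝ)) * (((S j).card : ℝ) - (A.card : ℝ)))
        (n : ℝ) hr0 hdist0 (by nlinarith) hb_pos hb_le hn1 hM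
    · -- case (j : ℕ) = k
      obtain ⟨jm, hjmv⟩ : ∃ jm : Fin (k + 1), (jm : ℕ) = k - 1 :=
        ⟨⟨k - 1, by omega⟩, rfl⟩
      have hAB : S jm ⊂ S j := hS (by rw [Fin.lt_def, hjmv]; omega)
      have hAsub : ∀ i : Fin (k + 1), i ≠ j → S i ⊆ S jm := by
        intro i hi
        apply hmono
        rw [Fin.le_def, hjmv]
        have : (i : ℕ) ≠ k := fun h => hi (Fin.ext (h.trans hjk.symm))
        have h2 := i.isLt
        omega
      have hab : (S jm).card < (S j).card := Finset.card_lt_card hAB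
      set d : Fin (n + 1) → ℝ := fun l => 1 - (if l ∈ S jm then 1 else 0) with hddef
      have hdsum : ∀ u : Finset (Fin (n + 1)), ∑ l ∈ u, d l
          = (u.card : ℝ) - ((u ∩ S jm).card : ℝ) := by
        intro u
        simp only [hddef]
        rw [Finset.sum_sub_distrib, Finset.sum_const, Finset.sum_boole,
          Finset.filter_mem_eq_inter, nsmul_eq_mul, mul_one]
      have hvj0 : ∀ i : Fin (k + 1), i ≠ j → ∑ l, μ i l * d l = 0 := by
        intro i hi
        rw [hμd i d, hdsum (S i)]
        rw [Finset.inter_eq_left.2 (hAsub i hi)]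
        simp
      have hvj : ∑ l, μ j l * d l
          = ((S j).card : ℝ)⁻¹ * (((S j).card : ℝ) - ((S jm).card : ℝ)) := by
        rw [hμd j d, hdsum (S j)]
        rw [Finset.inter_eq_right.2 hAB.subset]
      have habs : ∑ l, |d l - 0| = ((n : ℝ) + 1) - ((S jm).card : ℝ) := by
        have e1 : ∀ l : Fin (n + 1), |d l - 0| = d l := by
          intro l
          rw [sub_zero]
          apply abs_of_nonneg
          simp only [hddef]
          split <;> norm_num
        rw [Finset.sum_congr rfl fun l _ => e1 l, hdsum Finset.univ, Finset.univ_inter,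
          Finset.card_univ, Fintype.card_fin]
        push_cast
        ring
      have hM := master d 0 hvj0
      rw [hvj, habs] at hM
      have hb_pos : (0 : ℝ) < ((S j).card : ℝ) := by exact_mod_cast hcard_pos j
      have hb_le : ((S j).card : ℝ) ≤ (n : ℝ) + 1 := by exact_mod_cast hcard_le j
      have ha1 : (1 : ℝ) ≤ ((S jm).card : ℝ) := by exact_mod_cast hcard_pos jm
      have hP2 : (1 : ℝ) ≤ ((S j).card : ℝ) - ((S jm).card : ℝ) := by
        have : (S jm).card + 1 ≤ (S j).card := hab
        have h2 : (((S jm).card : ℝ)) + 1 ≤ ((S j).card : ℝ) := by exact_mod_cast this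
        linarith
      rw [abs_of_nonneg (mul_nonneg (by positivity) (by linarith))] at hM
      exact arith2 (simplexRad p) (dist (Finset.centroid ℝ Finset.univ q) x)
        ((S j).card : ℝ) ((S jm).card : ℝ) (n : ℝ) hr0 hdist0 ha1 (by exact_mod_cast hab)
        hb_le hn1 hM
  rw [show simplexRad q = Metric.infDist (Finset.centroid ℝ Finset.univ q)
      (⋃ (s : Finset (Fin (k + 1))) (_ : s ≠ Finset.univ), convexHull ℝ (q '' ↑s)) from rfl]
  by_contra hcon
  push_neg at hcon
  obtain ⟨y, hyU, hyd⟩ := (Metric.infDist_lt_iff hUne).1 hcon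
  exact absurd hyd (not_lt.2 (hmain y hyU))
end

section
/- Let A be an additive category, X a locally finite simplicial complex (as a poset of simplices), and C a finite chain complex in the category A*(X) whose morphisms f: M → N satisfy f_{τ,σ} = 0 unless τ ≤ σ. If for each simplex σ the diagonal chain complex C(σ) (with differential d_{σ,σ}) admits a chain contraction P_σ in A, then the map defined by P_{τ,σ} = Σ_{i=0}^{|σ|-|τ|} Σ_{τ=σ_0<...<σ_i=σ} (-1)^i P_{σ_0} d_{σ_0σ_1} P_{σ_1} ... d_{σ_{i-1}σ_i} P_{σ_i} is a chain contraction of C in A*(X). -/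
open CategoryTheory

attribute [local instance] Classical.propDecidable

/-- A finite chain complex in the simplicially graded additive category `A*(X)`:
objects are `X`-indexed collections of objects of `A`, the differential has components
`d i j σ τ : C_i(σ) ⟶ C_j(τ)` supported on `τ ≤ σ` and `j = i - 1`, with `d² = 0`
componentwise, and the complex is bounded. -/
structure GCx (X : Type) [PartialOrder X] [∀ ρ σ : X, Fintype {τ : X // ρ ≤ τ ∧ τ ≤ σ}]
    (A : Type) [Category A] [Preadditive A] where
  ob : ℤ → X → A
  d : ∀ (i j : ℤ) (σ τ : X), ob i σ ⟶ ob j τ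
  shape : ∀ (i j : ℤ) (σ τ : X), ¬(τ ≤ σ ∧ j = i - 1) → d i j σ τ = 0
  dsq : ∀ (i : ℤ) (σ ρ : X),
    (∑ τ : {τ : X // ρ ≤ τ ∧ τ ≤ σ}, d i (i - 1) σ τ.1 ≫ d (i - 1) (i - 1 - 1) τ.1 ρ) = 0
  bounded : ∃ N : ℕ, ∀ (i : ℤ) (σ : X), (N : ℤ) < |i| → Limits.IsZero (ob i σ)

variable {X : Type} [PartialOrder X] [∀ ρ σ : X, Fintype {τ : X // ρ ≤ τ ∧ τ ≤ σ}]
variable {A : Type} [Category A] [Preadditive A]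

/-- A chain contraction in `A` of the diagonal (local) chain complex `C(σ)`. -/
structure LocalContraction (C : GCx X A) (σ : X) where
  P : ∀ i j : ℤ, C.ob i σ ⟶ C.ob j σ
  shape : ∀ i j : ℤ, j ≠ i + 1 → P i j = 0
  contr : ∀ i : ℤ,
    C.d i (i - 1) σ σ ≫ P (i - 1) i + P i (i + 1) ≫ C.d (i + 1) i σ σ = 𝟙 (C.ob i σ)

/-- The alternating composite `P_{σ₀} d_{σ₀σ₁} P_{σ₁} ⋯ d_{σ_{i-1}σ_i} P_{σ_i}`
along a chain `c = (σ₀, …, σ_i)`. -/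
noncomputable def chainComp (C : GCx X A) (Pl : ∀ σ : X, LocalContraction C σ) (n : ℤ) :
    ∀ (i : ℕ) (c : Fin (i + 1) → X), (C.ob n (c (Fin.last i)) ⟶ C.ob (n + 1) (c 0))
  | 0, c => (Pl (c 0)).P n (n + 1)
  | (i + 1), c =>
      (Pl (c (Fin.last (i + 1)))).P n (n + 1) ≫
        C.d (n + 1) n (c (Fin.last (i + 1))) (c ((Fin.last i).castSucc)) ≫
        chainComp C Pl n i (fun j => c j.castSucc)

/-- The global degree `+1` map
`P_{τ,σ} = Σ_{i} Σ_{τ=σ₀<⋯<σ_i=σ} (−1)^i P_{σ₀} d_{σ₀σ₁} P_{σ₁} ⋯ d_{σ_{i-1}σ_i} P_{σ_i}`. -/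
noncomputable def globalP (C : GCx X A) (Pl : ∀ σ : X, LocalContraction C σ)
    (i j : ℤ) (σ τ : X) : C.ob i σ ⟶ C.ob j τ :=
  if h : τ ≤ σ ∧ j = i + 1 then
    (∑ k ∈ Finset.range (Fintype.card {τ' : X // τ ≤ τ' ∧ τ' ≤ σ}),
        ∑ c : {c : Fin (k + 1) → {τ' : X // τ ≤ τ' ∧ τ' ≤ σ} //
            StrictMono (fun j' => (c j').1) ∧ (c 0).1 = τ ∧ (c (Fin.last k)).1 = σ},
          ((-1 : ℤ) ^ k) •
            (eqToHom (congrArg (C.ob i) c.2.2.2.symm) ≫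
              chainComp C Pl i k (fun j' => (c.1 j').1) ≫
              eqToHom (congrArg (C.ob (i + 1)) c.2.2.1))) ≫
      eqToHom (congrArg (fun m => C.ob m τ) h.2.symm)
  else 0

section Aux

lemma card_interval_lt {ρ σ σ' : X} (h1 : ρ ≤ σ') (h2 : σ' ≤ σ) (h3 : σ' ≠ σ) :
    Fintype.card {τ : X // ρ ≤ τ ∧ τ ≤ σ'} < Fintype.card {τ : X // ρ ≤ τ ∧ τ ≤ σ} := by
  refine Fintype.card_lt_of_injective_of_notMem
    (fun t => ⟨t.1, t.2.1, t.2.2.trans h2⟩)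
    (fun a b hab => Subtype.ext (by simpa using congrArg Subtype.val hab))
    (b := ⟨σ, h1.trans h2, le_refl σ⟩) ?_
  rintro ⟨t, ht⟩
  have hv : t.1 = σ := by simpa using congrArg Subtype.val ht
  exact h3 (le_antisymm h2 (hv ▸ t.2.2))

noncomputable def Pg (C : GCx X A) (Pl : ∀ σ : X, LocalContraction C σ) (i j : ℤ) :
    ∀ σ τ : X, C.ob i σ ⟶ C.ob j τ := fun σ τ =>
  if hτσ : τ ≤ σ then
    (if hd : τ = σ then (Pl σ).P i j ≫ eqToHom (congrArg (C.ob j) hd.symm) else 0) -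
      (Pl σ).P i j ≫ ∑ υ : {υ : X // τ ≤ υ ∧ υ ≤ σ},
        if h : υ.1 = σ then 0 else C.d j i σ υ.1 ≫ Pg C Pl i j υ.1 τ
  else 0
termination_by σ τ => Fintype.card {υ : X // τ ≤ υ ∧ υ ≤ σ}
decreasing_by exact card_interval_lt υ.2.1 υ.2.2 h

lemma Pg_def (C : GCx X A) (Pl : ∀ σ : X, LocalContraction C σ) (i j : ℤ) (σ τ : X) :
    Pg C Pl i j σ τ =
      if hτσ : τ ≤ σ then
        (if hd : τ = σ then (Pl σ).P i j ≫ eqToHom (congrArg (C.ob j) hd.symm) else 0) -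
          (Pl σ).P i j ≫ ∑ υ : {υ : X // τ ≤ υ ∧ υ ≤ σ},
            if υ.1 = σ then 0 else C.d j i σ υ.1 ≫ Pg C Pl i j υ.1 τ
      else 0 := by
  rw [Pg]
  simp only [dite_eq_ite]

lemma Pg_diag (C : GCx X A) (Pl : ∀ σ : X, LocalContraction C σ) (i j : ℤ) (σ : X) :
    Pg C Pl i j σ σ = (Pl σ).P i j := by
  rw [Pg_def]
  rw [dif_pos (le_refl σ), dif_pos rfl]
  have hz : ∀ υ : {υ : X // σ ≤ υ ∧ υ ≤ σ},
      (if υ.1 = σ then 0 else C.d j i σ υ.1 ≫ Pg C Pl i j υ.1 σ) = 0 := fun υ =>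
    if_pos (le_antisymm υ.2.2 υ.2.1)
  simp [hz]

lemma Pg_not_le (C : GCx X A) (Pl : ∀ σ : X, LocalContraction C σ) (i j : ℤ) {σ τ : X}
    (h : ¬ τ ≤ σ) : Pg C Pl i j σ τ = 0 := by
  rw [Pg_def, dif_neg h]

lemma Pg_shape (C : GCx X A) (Pl : ∀ σ : X, LocalContraction C σ) {i j : ℤ}
    (h : j ≠ i + 1) (σ τ : X) : Pg C Pl i j σ τ = 0 := by
  rw [Pg_def]
  split
  · rw [(Pl σ).shape i j h]
    simp
  · rfl

end Aux
section Sums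

variable {M : Type*} [AddCommMonoid M]

lemma sum_split_top {ρ σ : X} (hρσ : ρ ≤ σ) (f : {τ : X // ρ ≤ τ ∧ τ ≤ σ} → M) :
    ∑ υ, f υ = f ⟨σ, hρσ, le_refl σ⟩ + ∑ υ, if υ.1 = σ then 0 else f υ := by
  have : ∀ υ : {τ : X // ρ ≤ τ ∧ τ ≤ σ},
      f υ = (if υ.1 = σ then f υ else 0) + (if υ.1 = σ then 0 else f υ) := by
    intro υ; split <;> simp
  rw [Finset.sum_congr rfl (fun υ _ => this υ), Finset.sum_add_distrib]
  congr 1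
  rw [Finset.sum_eq_single (⟨σ, hρσ, le_refl σ⟩ : {τ : X // ρ ≤ τ ∧ τ ≤ σ})]
  · exact if_pos rfl
  · intro b _ hb
    exact if_neg (fun hv => hb (Subtype.ext hv))
  · intro h; exact absurd (Finset.mem_univ _) h

lemma interval_swap (ρ σ : X) (g : X → X → M) :
    (∑ τ : {τ : X // ρ ≤ τ ∧ τ ≤ σ}, ∑ υ : {υ : X // τ.1 ≤ υ ∧ υ ≤ σ}, g υ.1 τ.1)
    = ∑ υ : {υ : X // ρ ≤ υ ∧ υ ≤ σ}, ∑ τ : {τ : X // ρ ≤ τ ∧ τ ≤ υ.1}, g υ.1 τ.1 := by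
  rw [Finset.sum_sigma' Finset.univ (fun _ => Finset.univ),
    Finset.sum_sigma' Finset.univ (fun _ => Finset.univ)]
  exact Finset.sum_bij'
    (fun x _ => ⟨⟨x.2.1, x.1.2.1.trans x.2.2.1, x.2.2.2⟩, ⟨x.1.1, x.1.2.1, x.2.2.1⟩⟩)
    (fun y _ => ⟨⟨y.2.1, y.2.2.1, y.2.2.2.trans y.1.2.2⟩, ⟨y.1.1, y.2.2.2, y.1.2.2⟩⟩)
    (fun _ _ => by simp) (fun _ _ => by simp)
    (fun x _ => rfl) (fun y _ => rfl) (fun x _ => rfl)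

end Sums
section Key

variable (C : GCx X A) (Pl : ∀ σ : X, LocalContraction C σ)

lemma dsq' (i : ℤ) (σ ρ : X) :
    (∑ τ : {τ : X // ρ ≤ τ ∧ τ ≤ σ}, C.d (i + 1) i σ τ.1 ≫ C.d i (i - 1) τ.1 ρ) = 0 := by
  have h := C.dsq (i + 1) σ ρ
  rw [show (i : ℤ) + 1 - 1 = i by ring] at h
  exact h

lemma eqToHom_d (m k : ℤ) {x σ : X} (ρ : X) (h : x = σ) :
    eqToHom (congrArg (C.ob m) h.symm) ≫ C.d m k x ρ = C.d m k σ ρ := by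
  subst h; simp

lemma dd_eq (i : ℤ) {σ τ : X} (hτσ : τ ≤ σ) :
    C.d (i + 1) i σ σ ≫ C.d i (i - 1) σ τ
      = -∑ υ : {υ : X // τ ≤ υ ∧ υ ≤ σ},
          (if υ.1 = σ then 0 else C.d (i + 1) i σ υ.1 ≫ C.d i (i - 1) υ.1 τ) := by
  have hs := sum_split_top (M := C.ob (i + 1) σ ⟶ C.ob (i - 1) τ) hτσ (fun υ : {υ : X // τ ≤ υ ∧ υ ≤ σ} => C.d (i + 1) i σ υ.1 ≫ C.d i (i - 1) υ.1 τ)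
  have h : C.d (i + 1) i σ σ ≫ C.d i (i - 1) σ τ
      + ∑ υ : {υ : X // τ ≤ υ ∧ υ ≤ σ},
          (if υ.1 = σ then 0 else C.d (i + 1) i σ υ.1 ≫ C.d i (i - 1) υ.1 τ) = 0 := by
    rw [← hs]; exact dsq' C i σ τ
  exact eq_neg_of_add_eq_zero_left h
open CategoryTheory.Limits CategoryTheory.Preadditive

lemma comp_ite0 {P Q R : A} (p : Prop) [Decidable p] (f : P ⟶ Q) (g : Q ⟶ R) :
    f ≫ (if p then 0 else g) = if p then 0 else f ≫ g := by
  split <;> simp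

lemma ite_comp0 {P Q R : A} (p : Prop) [Decidable p] (f : P ⟶ Q) (g : Q ⟶ R) :
    (if p then 0 else f) ≫ g = if p then 0 else f ≫ g := by
  split <;> simp

lemma ite_sub0 {M : Type*} [SubtractionMonoid M] (p : Prop) [Decidable p] (a b : M) :
    (if p then 0 else (a - b)) = (if p then 0 else a) - (if p then 0 else b) := by
  split <;> simp

lemma keyE (i : ℤ) : ∀ (n : ℕ) (σ ρ : X), Fintype.card {τ : X // ρ ≤ τ ∧ τ ≤ σ} ≤ n →
    (∑ τ : {τ : X // ρ ≤ τ ∧ τ ≤ σ}, C.d i (i - 1) σ τ.1 ≫ Pg C Pl (i - 1) i τ.1 ρ)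
      + (∑ τ : {τ : X // ρ ≤ τ ∧ τ ≤ σ}, Pg C Pl i (i + 1) σ τ.1 ≫ C.d (i + 1) i τ.1 ρ)
      = if h : ρ = σ then eqToHom (congrArg (C.ob i) h.symm) else 0 := by
  intro n
  induction n with
  | zero =>
    intro σ ρ hcard
    haveI : IsEmpty {τ : X // ρ ≤ τ ∧ τ ≤ σ} :=
      Fintype.card_eq_zero_iff.mp (Nat.le_zero.mp hcard)
    have hne : ρ ≠ σ := fun h =>
      (IsEmpty.false (⟨σ, le_of_eq h, le_refl σ⟩ : {τ : X // ρ ≤ τ ∧ τ ≤ σ}))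
    simp [Finset.univ_eq_empty, dif_neg hne]
  | succ n ih =>
    intro σ ρ hcard
    by_cases hd : ρ = σ
    · subst hd
      letI : Unique {τ : X // ρ ≤ τ ∧ τ ≤ ρ} :=
        ⟨⟨⟨ρ, le_refl ρ, le_refl ρ⟩⟩, fun a => Subtype.ext (le_antisymm a.2.2 a.2.1)⟩
      rw [dif_pos rfl, Fintype.sum_unique, Fintype.sum_unique]
      show C.d i (i - 1) ρ ρ ≫ Pg C Pl (i - 1) i ρ ρ
          + Pg C Pl i (i + 1) ρ ρ ≫ C.d (i + 1) i ρ ρ = eqToHom _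
      rw [Pg_diag, Pg_diag, (Pl ρ).contr i]
      simp
    · by_cases hle : ρ ≤ σ
      swap
      · haveI : IsEmpty {τ : X // ρ ≤ τ ∧ τ ≤ σ} := ⟨fun τ => hle (τ.2.1.trans τ.2.2)⟩
        simp [Finset.univ_eq_empty, dif_neg hd]
      rw [dif_neg hd]
      -- the two key inner sums
      -- EU := ∑ υ, ite (υ.1 = σ) 0 (d i (i-1) σ υ ≫ Pg (i-1) i υ ρ)
      -- W  := ∑ u, ite (u.1 = σ) 0 (d (i+1) i σ u ≫ PD_u)
      -- Step A: split off the top of DP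
      have hsplit := sum_split_top (M := C.ob i σ ⟶ C.ob i ρ) hle
        (fun τ : {τ : X // ρ ≤ τ ∧ τ ≤ σ} =>
          C.d i (i - 1) σ τ.1 ≫ Pg C Pl (i - 1) i τ.1 ρ)
      -- Step B: Pg at (σ, ρ)
      have hB : Pg C Pl (i - 1) i σ ρ = -((Pl σ).P (i - 1) i ≫
          ∑ υ : {τ : X // ρ ≤ τ ∧ τ ≤ σ},
            if υ.1 = σ then 0 else C.d i (i - 1) σ υ.1 ≫ Pg C Pl (i - 1) i υ.1 ρ) := by
        rw [Pg_def, dif_pos hle, dif_neg hd, zero_sub]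
      -- Step C: contraction at σ
      have hC : C.d i (i - 1) σ σ ≫ (Pl σ).P (i - 1) i
          = 𝟙 (C.ob i σ) - (Pl σ).P i (i + 1) ≫ C.d (i + 1) i σ σ :=
        eq_sub_of_add_eq ((Pl σ).contr i)
      -- Step D: d(i+1,i)σσ ≫ EU
      have hD : C.d (i + 1) i σ σ ≫ (∑ υ : {τ : X // ρ ≤ τ ∧ τ ≤ σ},
            if υ.1 = σ then 0 else C.d i (i - 1) σ υ.1 ≫ Pg C Pl (i - 1) i υ.1 ρ)
          = -C.d (i + 1) i σ ρ + ∑ u : {τ : X // ρ ≤ τ ∧ τ ≤ σ},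
              (if u.1 = σ then 0 else C.d (i + 1) i σ u.1 ≫
                ∑ t : {t : X // ρ ≤ t ∧ t ≤ u.1},
                  Pg C Pl i (i + 1) u.1 t.1 ≫ C.d (i + 1) i t.1 ρ) := by
        rw [comp_sum]
        have step1 : ∀ υ : {τ : X // ρ ≤ τ ∧ τ ≤ σ},
            C.d (i + 1) i σ σ ≫ (if υ.1 = σ then 0
                else C.d i (i - 1) σ υ.1 ≫ Pg C Pl (i - 1) i υ.1 ρ)
            = -∑ w : {w : X // υ.1 ≤ w ∧ w ≤ σ},
                (if w.1 = σ then 0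
                  else C.d (i + 1) i σ w.1 ≫ C.d i (i - 1) w.1 υ.1 ≫ Pg C Pl (i - 1) i υ.1 ρ) := by
          intro υ
          by_cases hυ : υ.1 = σ
          · rw [if_pos hυ, comp_zero,
              Finset.sum_congr rfl (fun w _ => if_pos (le_antisymm w.2.2 ((le_of_eq hυ.symm).trans w.2.1)))]
            simp
          · rw [if_neg hυ, ← Category.assoc, dd_eq C i υ.2.2, neg_comp,
              sum_comp]
            congr 1
            refine Finset.sum_congr rfl (fun w _ => ?_)
            rw [ite_comp0, Category.assoc]
        rw [Finset.sum_congr rfl (fun υ _ => step1 υ), Finset.sum_neg_distrib]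
        rw [interval_swap (M := C.ob (i + 1) σ ⟶ C.ob i ρ) ρ σ
          (fun u t => if u = σ then 0
            else C.d (i + 1) i σ u ≫ C.d i (i - 1) u t ≫ Pg C Pl (i - 1) i t ρ)]
        have step2 : ∀ u : {τ : X // ρ ≤ τ ∧ τ ≤ σ},
            (∑ t : {t : X // ρ ≤ t ∧ t ≤ u.1},
              if u.1 = σ then 0
                else C.d (i + 1) i σ u.1 ≫ C.d i (i - 1) u.1 t.1 ≫ Pg C Pl (i - 1) i t.1 ρ)
            = (if u.1 = σ then 0 else C.d (i + 1) i σ u.1 ≫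
                (if h : ρ = u.1 then eqToHom (congrArg (C.ob i) h.symm) else 0))
              - (if u.1 = σ then 0 else C.d (i + 1) i σ u.1 ≫
                ∑ t : {t : X // ρ ≤ t ∧ t ≤ u.1},
                  Pg C Pl i (i + 1) u.1 t.1 ≫ C.d (i + 1) i t.1 ρ) := by
          intro u
          by_cases hu : u.1 = σ
          · simp [hu]
          · simp only [if_neg hu]
            rw [← comp_sum]
            have hcard' : Fintype.card {t : X // ρ ≤ t ∧ t ≤ u.1} ≤ n :=
              Nat.lt_succ_iff.mp (lt_of_lt_of_le (card_interval_lt u.2.1 u.2.2 hu) hcard)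
            have hih := ih u.1 ρ hcard'
            have : (∑ t : {t : X // ρ ≤ t ∧ t ≤ u.1},
                C.d i (i - 1) u.1 t.1 ≫ Pg C Pl (i - 1) i t.1 ρ)
                = (if h : ρ = u.1 then eqToHom (congrArg (C.ob i) h.symm) else 0)
                  - ∑ t : {t : X // ρ ≤ t ∧ t ≤ u.1},
                      Pg C Pl i (i + 1) u.1 t.1 ≫ C.d (i + 1) i t.1 ρ :=
              eq_sub_of_add_eq hih
            rw [this, comp_sub]
        rw [Finset.sum_congr rfl (fun u _ => step2 u), Finset.sum_sub_distrib]
        have hδ : (∑ u : {τ : X // ρ ≤ τ ∧ τ ≤ σ},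
            (if u.1 = σ then 0 else C.d (i + 1) i σ u.1 ≫
              (if h : ρ = u.1 then eqToHom (congrArg (C.ob i) h.symm) else 0)))
            = C.d (i + 1) i σ ρ := by
          rw [Finset.sum_eq_single (⟨ρ, le_refl ρ, hle⟩ : {τ : X // ρ ≤ τ ∧ τ ≤ σ})]
          · rw [if_neg (show (ρ : X) ≠ σ from hd), dif_pos rfl]
            simp
          · intro b _ hb
            by_cases hbσ : b.1 = σ
            · rw [if_pos hbσ]
            · rw [if_neg hbσ, dif_neg (fun h => hb (Subtype.ext h.symm)), comp_zero]
          · intro h; exact absurd (Finset.mem_univ _) h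
        rw [hδ, neg_sub]
        abel
      -- assemble DP
      have hDP : (∑ τ : {τ : X // ρ ≤ τ ∧ τ ≤ σ},
            C.d i (i - 1) σ τ.1 ≫ Pg C Pl (i - 1) i τ.1 ρ)
          = -((Pl σ).P i (i + 1) ≫ C.d (i + 1) i σ ρ)
            + (Pl σ).P i (i + 1) ≫ ∑ u : {τ : X // ρ ≤ τ ∧ τ ≤ σ},
              (if u.1 = σ then 0 else C.d (i + 1) i σ u.1 ≫
                ∑ t : {t : X // ρ ≤ t ∧ t ≤ u.1},
                  Pg C Pl i (i + 1) u.1 t.1 ≫ C.d (i + 1) i t.1 ρ) := by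
        rw [hsplit, hB, comp_neg, ← Category.assoc, hC, sub_comp, Category.id_comp,
          Category.assoc, hD, comp_add, comp_neg]
        abel
      -- assemble PD
      have hPD : (∑ τ : {τ : X // ρ ≤ τ ∧ τ ≤ σ},
            Pg C Pl i (i + 1) σ τ.1 ≫ C.d (i + 1) i τ.1 ρ)
          = (Pl σ).P i (i + 1) ≫ C.d (i + 1) i σ ρ
            - (Pl σ).P i (i + 1) ≫ ∑ u : {τ : X // ρ ≤ τ ∧ τ ≤ σ},
              (if u.1 = σ then 0 else C.d (i + 1) i σ u.1 ≫
                ∑ t : {t : X // ρ ≤ t ∧ t ≤ u.1},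
                  Pg C Pl i (i + 1) u.1 t.1 ≫ C.d (i + 1) i t.1 ρ) := by
        have expand : ∀ τ : {τ : X // ρ ≤ τ ∧ τ ≤ σ},
            Pg C Pl i (i + 1) σ τ.1 ≫ C.d (i + 1) i τ.1 ρ
            = ((if h : τ.1 = σ then (Pl σ).P i (i + 1) ≫ eqToHom (congrArg (C.ob (i + 1)) h.symm)
                  else 0) ≫ C.d (i + 1) i τ.1 ρ)
              - (Pl σ).P i (i + 1) ≫ ∑ w : {w : X // τ.1 ≤ w ∧ w ≤ σ},
                  (if w.1 = σ then 0
                    else C.d (i + 1) i σ w.1 ≫ Pg C Pl i (i + 1) w.1 τ.1 ≫ C.d (i + 1) i τ.1 ρ) := by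
          intro τ
          rw [Pg_def, dif_pos τ.2.2, sub_comp, Category.assoc, sum_comp]
          congr 2
          refine Finset.sum_congr rfl (fun w _ => ?_)
          rw [ite_comp0, Category.assoc]
        rw [Finset.sum_congr rfl (fun τ _ => expand τ), Finset.sum_sub_distrib]
        congr 1
        · rw [Finset.sum_eq_single (⟨σ, hle, le_refl σ⟩ : {τ : X // ρ ≤ τ ∧ τ ≤ σ})]
          · rw [dif_pos rfl]
            simp
          · intro b _ hb
            rw [dif_neg (fun h => hb (Subtype.ext h)), zero_comp]
          · intro h; exact absurd (Finset.mem_univ _) h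
        · rw [← comp_sum]
          congr 1
          rw [interval_swap (M := C.ob (i + 1) σ ⟶ C.ob i ρ) ρ σ
            (fun u t => if u = σ then 0
              else C.d (i + 1) i σ u ≫ Pg C Pl i (i + 1) u t ≫ C.d (i + 1) i t ρ)]
          refine Finset.sum_congr rfl (fun u _ => ?_)
          by_cases hu : u.1 = σ
          · simp [hu]
          · simp only [if_neg hu]
            rw [← comp_sum]
      rw [hDP, hPD]
      abel

end Key
open CategoryTheory.Limits CategoryTheory.Preadditive

section Chains

variable (C : GCx X A) (Pl : ∀ σ : X, LocalContraction C σ)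

/-- the type of strict chains of length `k` from `τ` up to `σ` inside the interval. -/
abbrev Chn (k : ℕ) (σ τ : X) :=
  {c : Fin (k + 1) → {τ' : X // τ ≤ τ' ∧ τ' ≤ σ} //
      StrictMono (fun j' => (c j').1) ∧ (c 0).1 = τ ∧ (c (Fin.last k)).1 = σ}

/-- the conjugated chain composite -/
noncomputable def E (i : ℤ) (k : ℕ) (σ τ : X) (v : Fin (k + 1) → X)
    (h0 : v 0 = τ) (hl : v (Fin.last k) = σ) : C.ob i σ ⟶ C.ob (i + 1) τ :=
  eqToHom (congrArg (C.ob i) hl.symm) ≫ chainComp C Pl i k v ≫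
    eqToHom (congrArg (C.ob (i + 1)) h0)

lemma E_zero (i : ℤ) (σ τ : X) (v : Fin 1 → X) (h0 : v 0 = τ) (hl : v (Fin.last 0) = σ) :
    E C Pl i 0 σ τ v h0 hl
      = eqToHom (congrArg (C.ob i) hl.symm) ≫ (Pl (v 0)).P i (i + 1)
          ≫ eqToHom (congrArg (C.ob (i + 1)) h0) := by
  simp [E, chainComp]

lemma E_succ (i : ℤ) (k : ℕ) (σ τ : X) (v : Fin (k + 2) → X)
    (h0 : v 0 = τ) (hl : v (Fin.last (k + 1)) = σ)
    (h0' : (fun j : Fin (k + 1) => v j.castSucc) 0 = τ) :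
    E C Pl i (k + 1) σ τ v h0 hl
      = (Pl σ).P i (i + 1) ≫ C.d (i + 1) i σ (v ((Fin.last k).castSucc)) ≫
          E C Pl i k (v ((Fin.last k).castSucc)) τ (fun j => v j.castSucc) h0' rfl := by
  subst hl
  simp [E, chainComp]
  exact congrArg ((Pl _).P i (i + 1) ≫ ·) (Category.assoc _ _ _)

end Chains
section SgDef

variable (C : GCx X A) (Pl : ∀ σ : X, LocalContraction C σ)

noncomputable def Sgk (i : ℤ) (σ τ : X) (k : ℕ) : C.ob i σ ⟶ C.ob (i + 1) τ :=
  ∑ c : Chn k σ τ,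
    ((-1 : ℤ) ^ k) • E C Pl i k σ τ (fun j' => (c.1 j').1) c.2.2.1 c.2.2.2

noncomputable def Sg (i : ℤ) (σ τ : X) : C.ob i σ ⟶ C.ob (i + 1) τ :=
  ∑ k ∈ Finset.range (Fintype.card {τ' : X // τ ≤ τ' ∧ τ' ≤ σ}), Sgk C Pl i σ τ k

lemma chn_isEmpty {k : ℕ} {σ τ : X}
    (h : Fintype.card {τ' : X // τ ≤ τ' ∧ τ' ≤ σ} ≤ k) : IsEmpty (Chn k σ τ) := by
  constructor
  rintro ⟨c, hmono, -, -⟩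
  have hinj : Function.Injective c := fun a b hab =>
    hmono.injective (show (c a).1 = (c b).1 from congrArg Subtype.val hab)
  have := Fintype.card_le_of_injective c hinj
  rw [Fintype.card_fin] at this
  omega

lemma Sgk_zero_of_card (i : ℤ) {σ τ : X} {k : ℕ}
    (h : Fintype.card {τ' : X // τ ≤ τ' ∧ τ' ≤ σ} ≤ k) : Sgk C Pl i σ τ k = 0 := by
  haveI := chn_isEmpty h
  rw [Sgk, Finset.univ_eq_empty, Finset.sum_empty]

lemma Sg_eq_range (i : ℤ) (σ τ : X) {N : ℕ}
    (h : Fintype.card {τ' : X // τ ≤ τ' ∧ τ' ≤ σ} ≤ N) :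
    Sg C Pl i σ τ = ∑ k ∈ Finset.range N, Sgk C Pl i σ τ k := by
  rw [Sg]
  refine Finset.sum_subset (Finset.range_subset_range.mpr h) (fun k _ hk => ?_)
  exact Sgk_zero_of_card C Pl i (by simpa using (Finset.mem_range.not.mp hk))

lemma Sg_not_le (i : ℤ) {σ τ : X} (h : ¬ τ ≤ σ) : Sg C Pl i σ τ = 0 := by
  haveI : IsEmpty {τ' : X // τ ≤ τ' ∧ τ' ≤ σ} := ⟨fun x => h (x.2.1.trans x.2.2)⟩
  rw [Sg, Fintype.card_eq_zero, Finset.range_zero, Finset.sum_empty]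

lemma Sg_diag (i : ℤ) (σ : X) : Sg C Pl i σ σ = (Pl σ).P i (i + 1) := by
  letI : Unique {τ' : X // σ ≤ τ' ∧ τ' ≤ σ} :=
    ⟨⟨⟨σ, le_refl σ, le_refl σ⟩⟩, fun a => Subtype.ext (le_antisymm a.2.2 a.2.1)⟩
  have hcard : Fintype.card {τ' : X // σ ≤ τ' ∧ τ' ≤ σ} = 1 := Fintype.card_unique
  rw [Sg, hcard, Finset.range_one, Finset.sum_singleton]
  letI : Unique (Chn 0 σ σ) := by
    refine ⟨⟨⟨fun _ => ⟨σ, le_refl σ, le_refl σ⟩, ?_, rfl, rfl⟩⟩, ?_⟩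
    · intro a b hab
      exact absurd hab (by omega)
    · rintro ⟨c, hmono, h0, hl⟩
      apply Subtype.ext
      funext j
      exact Subtype.ext (by
        have h1 : j = 0 := Fin.fin_one_eq_zero j
        rw [h1]; exact h0)
  rw [Sgk, Fintype.sum_unique, E_zero]
  simp only [pow_zero, one_smul, eqToHom_refl, Category.comp_id, Category.id_comp]
  rfl
end SgDef
section Bij

variable {σ τ : X}

def chopU {k : ℕ} (c : Chn (k + 1) σ τ) : {υ : X // τ ≤ υ ∧ υ ≤ σ} :=
  c.1 ((Fin.last k).castSucc)

def chop {k : ℕ} (c : Chn (k + 1) σ τ) : Chn k (chopU c).1 τ :=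
  ⟨fun j => ⟨(c.1 j.castSucc).1, (c.1 j.castSucc).2.1,
      c.2.1.monotone (Fin.castSucc_le_castSucc_iff.mpr (Fin.le_last j))⟩,
   fun a b hab => c.2.1 (Fin.castSucc_lt_castSucc_iff.mpr hab),
   (congrArg (fun x => (c.1 x).1) Fin.castSucc_zero).trans c.2.2.1,
   rfl⟩

def glueFun (hle : τ ≤ σ) (u : {υ : X // τ ≤ υ ∧ υ ≤ σ}) {k : ℕ} (c' : Chn k u.1 τ) :
    Fin (k + 2) → {τ' : X // τ ≤ τ' ∧ τ' ≤ σ} := fun j =>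
  if h : j = Fin.last (k + 1) then ⟨σ, hle, le_refl σ⟩
  else ⟨(c'.1 (j.castPred h)).1, (c'.1 (j.castPred h)).2.1,
    (c'.1 (j.castPred h)).2.2.trans u.2.2⟩

lemma glueFun_last (hle : τ ≤ σ) (u : {υ : X // τ ≤ υ ∧ υ ≤ σ}) {k : ℕ} (c' : Chn k u.1 τ) :
    glueFun hle u c' (Fin.last (k + 1)) = ⟨σ, hle, le_refl σ⟩ := by
  simp [glueFun]

lemma glueFun_castSucc (hle : τ ≤ σ) (u : {υ : X // τ ≤ υ ∧ υ ≤ σ}) {k : ℕ}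
    (c' : Chn k u.1 τ) (j : Fin (k + 1)) :
    (glueFun hle u c' j.castSucc).1 = (c'.1 j).1 := by
  rw [glueFun, dif_neg (Fin.castSucc_lt_last j).ne]
  simp [Fin.castPred_castSucc]

def glue (hle : τ ≤ σ) (u : {υ : X // τ ≤ υ ∧ υ ≤ σ}) (hu : u.1 ≠ σ) {k : ℕ}
    (c' : Chn k u.1 τ) : Chn (k + 1) σ τ := by
  refine ⟨glueFun hle u c', ?_, ?_, ?_⟩
  · intro a b hab
    show (glueFun hle u c' a).1 < (glueFun hle u c' b).1
    by_cases hbl : b = Fin.last (k + 1)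
    · subst hbl
      have hal : a ≠ Fin.last (k + 1) := ne_of_lt hab
      rw [glueFun_last, ← Fin.castSucc_castPred a hal, glueFun_castSucc]
      exact lt_of_le_of_lt (c'.1 (a.castPred hal)).2.2 (lt_of_le_of_ne u.2.2 hu)
    · have hal : a ≠ Fin.last (k + 1) :=
        ne_of_lt (lt_of_lt_of_le hab (Fin.le_last b))
      rw [← Fin.castSucc_castPred a hal, ← Fin.castSucc_castPred b hbl,
        glueFun_castSucc, glueFun_castSucc]
      refine c'.2.1 (show a.castPred hal < b.castPred hbl by
        rw [Fin.lt_def, Fin.coe_castPred, Fin.coe_castPred]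
        exact Fin.lt_def.mp hab)
  · show (glueFun hle u c' 0).1 = τ
    rw [show (0 : Fin (k + 2)) = (0 : Fin (k + 1)).castSucc from rfl, glueFun_castSucc]
    exact c'.2.2.1
  · show (glueFun hle u c' (Fin.last (k + 1))).1 = σ
    rw [glueFun_last]

lemma chn_heq {k : ℕ} {u v : {υ : X // τ ≤ υ ∧ υ ≤ σ}} (h : u = v)
    (a : Chn k u.1 τ) (b : Chn k v.1 τ) (hv : ∀ j, (a.1 j).1 = (b.1 j).1) : HEq a b := by
  subst h
  exact heq_of_eq (Subtype.ext (funext fun j => Subtype.ext (hv j)))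

end Bij

section SgkSucc

variable (C : GCx X A) (Pl : ∀ σ : X, LocalContraction C σ)

lemma Sgk_succ (i : ℤ) {σ τ : X} (hle : τ ≤ σ) (k : ℕ) :
    Sgk C Pl i σ τ (k + 1)
      = ∑ u : {υ : X // τ ≤ υ ∧ υ ≤ σ},
          (if u.1 = σ then 0
            else -((Pl σ).P i (i + 1) ≫ C.d (i + 1) i σ u.1 ≫ Sgk C Pl i u.1 τ k)) := by
  have rhs1 : ∀ u : {υ : X // τ ≤ υ ∧ υ ≤ σ},
      (if u.1 = σ then 0
        else -((Pl σ).P i (i + 1) ≫ C.d (i + 1) i σ u.1 ≫ Sgk C Pl i u.1 τ k))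
      = if ¬ u.1 = σ then
          ∑ c' : Chn k u.1 τ,
            -((Pl σ).P i (i + 1) ≫ C.d (i + 1) i σ u.1 ≫
              ((-1 : ℤ) ^ k • E C Pl i k u.1 τ (fun j' => (c'.1 j').1) c'.2.2.1 c'.2.2.2))
        else 0 := by
    intro u
    by_cases hu : u.1 = σ
    · simp [hu]
    · rw [if_neg hu, if_pos hu, Sgk, comp_sum, comp_sum, ← Finset.sum_neg_distrib]
  rw [Finset.sum_congr rfl (fun u _ => rhs1 u), ← Finset.sum_filter, Finset.sum_sigma']
  rw [Sgk]
  refine Finset.sum_bij'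
    (i := fun (c : Chn (k + 1) σ τ) (_ : c ∈ Finset.univ) =>
      (⟨chopU c, chop c⟩ : Σ u : {υ : X // τ ≤ υ ∧ υ ≤ σ}, Chn k u.1 τ))
    (j := fun y hy => glue hle y.1
      (by simpa using (Finset.mem_filter.mp (Finset.mem_sigma.mp hy).1).2) y.2)
    ?_ ?_ ?_ ?_ ?_
  · intro c _
    rw [Finset.mem_sigma]
    refine ⟨Finset.mem_filter.mpr ⟨Finset.mem_univ _, ?_⟩, Finset.mem_univ _⟩
    show ¬(chopU c).1 = σ
    have hlt : ((c.1 ((Fin.last k).castSucc)).1 : X) < (c.1 (Fin.last (k + 1))).1 :=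
      c.2.1 (Fin.castSucc_lt_last (Fin.last k))
    rw [c.2.2.2] at hlt
    exact ne_of_lt hlt
  · intro y hy
    exact Finset.mem_univ _
  · -- left inverse : glue (chop c) = c
    intro c _
    apply Subtype.ext
    funext j
    apply Subtype.ext
    by_cases hj : j = Fin.last (k + 1)
    · subst hj
      show (glueFun hle (chopU c) (chop c) (Fin.last (k + 1))).1 = _
      rw [glueFun_last]
      exact c.2.2.2.symm
    · show (glueFun hle (chopU c) (chop c) j).1 = _
      rw [← Fin.castSucc_castPred j hj, glueFun_castSucc]
      rfl
  · -- right inverse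
    rintro ⟨u, c'⟩ hy
    have hu : u.1 ≠ σ := by simpa using (Finset.mem_filter.mp (Finset.mem_sigma.mp hy).1).2
    have h1 : chopU (glue hle u hu c') = u := by
      apply Subtype.ext
      show (glueFun hle u c' ((Fin.last k).castSucc)).1 = u.1
      rw [glueFun_castSucc]
      exact c'.2.2.2
    refine Sigma.ext h1 (chn_heq h1 _ _ (fun j => ?_))
    show (glueFun hle u c' j.castSucc).1 = (c'.1 j).1
    rw [glueFun_castSucc]
  · -- summand equality
    intro c _
    rw [E_succ C Pl i k σ τ (fun j' => (c.1 j').1) c.2.2.1 c.2.2.2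
      ((congrArg (fun x => (c.1 x).1) Fin.castSucc_zero).trans c.2.2.1)]
    rw [comp_zsmul, comp_zsmul, pow_succ, mul_neg_one, neg_smul]
    rfl

end SgkSucc
section Assemble

variable (C : GCx X A) (Pl : ∀ σ : X, LocalContraction C σ)

lemma Sgk_zero_of_ne (i : ℤ) {σ τ : X} (hd : τ ≠ σ) : Sgk C Pl i σ τ 0 = 0 := by
  haveI : IsEmpty (Chn 0 σ τ) := ⟨fun c => hd (c.2.2.1.symm.trans c.2.2.2)⟩
  rw [Sgk, Finset.univ_eq_empty, Finset.sum_empty]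

lemma Sg_eq_Pg (i : ℤ) : ∀ (n : ℕ) (σ τ : X),
    Fintype.card {τ' : X // τ ≤ τ' ∧ τ' ≤ σ} ≤ n →
    Sg C Pl i σ τ = Pg C Pl i (i + 1) σ τ := by
  intro n
  induction n with
  | zero =>
    intro σ τ h
    have hnle : ¬ τ ≤ σ := fun hle =>
      (Fintype.card_eq_zero_iff.mp (Nat.le_zero.mp h)).false ⟨τ, le_refl τ, hle⟩
    rw [Sg_not_le C Pl i hnle, Pg_not_le C Pl i (i + 1) hnle]
  | succ n ih =>
    intro σ τ hn
    by_cases hle : τ ≤ σ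
    · by_cases hd : τ = σ
      · subst hd
        rw [Sg_diag, Pg_diag]
      · rw [Sg_eq_range C Pl i σ τ
          (Nat.le_succ_of_le (le_refl (Fintype.card {τ' : X // τ ≤ τ' ∧ τ' ≤ σ}))),
          Finset.sum_range_succ', Sgk_zero_of_ne C Pl i hd, add_zero]
        rw [Finset.sum_congr rfl (fun k _ => Sgk_succ C Pl i hle k), Finset.sum_comm]
        rw [Pg_def, dif_pos hle, dif_neg hd, zero_sub, comp_sum, ← Finset.sum_neg_distrib]
        refine Finset.sum_congr rfl (fun u _ => ?_)
        by_cases hu : u.1 = σ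
        · simp [hu]
        · simp only [if_neg hu]
          have hcard : Fintype.card {τ' : X // τ ≤ τ' ∧ τ' ≤ u.1}
              ≤ Fintype.card {τ' : X // τ ≤ τ' ∧ τ' ≤ σ} :=
            le_of_lt (card_interval_lt u.2.1 u.2.2 hu)
          rw [Finset.sum_neg_distrib, ← comp_sum, ← comp_sum,
            ← Sg_eq_range C Pl i u.1 τ hcard,
            ih u.1 τ (Nat.lt_succ_iff.mp
              (lt_of_lt_of_le (card_interval_lt u.2.1 u.2.2 hu) hn))]
    · rw [Sg_not_le C Pl i hle, Pg_not_le C Pl i (i + 1) hle]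

lemma globalP_eq_Pg (i j : ℤ) (σ τ : X) :
    globalP C Pl i j σ τ = Pg C Pl i j σ τ := by
  by_cases hj : j = i + 1
  · subst hj
    by_cases hle : τ ≤ σ
    · rw [globalP, dif_pos ⟨hle, rfl⟩]
      have hS : (∑ k ∈ Finset.range (Fintype.card {τ' : X // τ ≤ τ' ∧ τ' ≤ σ}),
          ∑ c : {c : Fin (k + 1) → {τ' : X // τ ≤ τ' ∧ τ' ≤ σ} //
              StrictMono (fun j' => (c j').1) ∧ (c 0).1 = τ ∧ (c (Fin.last k)).1 = σ},
            ((-1 : ℤ) ^ k) •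
              (eqToHom (congrArg (C.ob i) c.2.2.2.symm) ≫
                chainComp C Pl i k (fun j' => (c.1 j').1) ≫
                eqToHom (congrArg (C.ob (i + 1)) c.2.2.1))) = Sg C Pl i σ τ := rfl
      rw [hS, Sg_eq_Pg C Pl i (Fintype.card {τ' : X // τ ≤ τ' ∧ τ' ≤ σ}) σ τ (le_refl _)]
      simp
    · rw [globalP, dif_neg (fun h => hle h.1), Pg_not_le C Pl i (i + 1) hle]
  · rw [globalP, dif_neg (fun h => hj h.2), Pg_shape C Pl hj]

end Assemble
/-- if every local complex `C(σ)` admits a chain contraction `P_σ` in `A`,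
then the map `P_{τ,σ} = Σ_i Σ_{τ=σ₀<⋯<σ_i=σ} (−1)^i P_{σ₀} d_{σ₀σ₁} ⋯ d_{σ_{i-1}σ_i} P_{σ_i}`
is a chain contraction of `C` in `A*(X)`: `dP + Pd` is the identity on the diagonal and
zero off the diagonal. -/
theorem stmt3 (C : GCx X A) (Pl : ∀ σ : X, LocalContraction C σ) :
    ∀ (i : ℤ) (σ ρ : X),
      (∑ τ : {τ : X // ρ ≤ τ ∧ τ ≤ σ}, C.d i (i - 1) σ τ.1 ≫ globalP C Pl (i - 1) i τ.1 ρ)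
        + (∑ τ : {τ : X // ρ ≤ τ ∧ τ ≤ σ}, globalP C Pl i (i + 1) σ τ.1 ≫ C.d (i + 1) i τ.1 ρ)
      = if h : ρ = σ then eqToHom (by rw [h]) else 0 := by
  intro i σ ρ
  have h := keyE C Pl i (Fintype.card {τ : X // ρ ≤ τ ∧ τ ≤ σ}) σ ρ (le_refl _)
  simp only [globalP_eq_Pg]
  exact h
end

section
/- Let A be an additive category, X a locally finite simplicial complex, and C a finite chain complex in A*(X). Then C is chain contractible in A*(X) if and only if for every simplex σ of X, the diagonal chain complex C(σ) is chain contractible in A. -/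
open CategoryTheory

attribute [local instance] Classical.propDecidable

variable {X : Type} [PartialOrder X] [∀ ρ σ : X, Fintype {τ : X // ρ ≤ τ ∧ τ ≤ σ}]
variable {A : Type} [Category A] [Preadditive A]

/-- A chain contraction of `C` in `A*(X)`: a degree `+1` morphism of `A*(X)`
(components supported on `τ ≤ σ`) with `dP + Pd = id`. -/
structure GlobalContraction (C : GCx X A) where
  P : ∀ (i j : ℤ) (σ τ : X), C.ob i σ ⟶ C.ob j τ
  shape : ∀ (i j : ℤ) (σ τ : X), ¬(τ ≤ σ ∧ j = i + 1) → P i j σ τ = 0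
  contr : ∀ (i : ℤ) (σ ρ : X),
    (∑ τ : {τ : X // ρ ≤ τ ∧ τ ≤ σ}, C.d i (i - 1) σ τ.1 ≫ P (i - 1) i τ.1 ρ)
      + (∑ τ : {τ : X // ρ ≤ τ ∧ τ ≤ σ}, P i (i + 1) σ τ.1 ≫ C.d (i + 1) i τ.1 ρ)
    = if h : ρ = σ then eqToHom (by rw [h]) else 0

namespace Stmt4Aux

/-- The (closed) interval of the poset, as a subtype. -/
abbrev Itv (ρ σ : X) := {τ : X // ρ ≤ τ ∧ τ ≤ σ}

section Sums

variable {M' : Type*} [AddCommMonoid M']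

lemma sum_diag (σ : X) (f : Itv σ σ → M') :
    (∑ τ : Itv σ σ, f τ) = f ⟨σ, le_refl σ, le_refl σ⟩ :=
  Finset.sum_eq_single_of_mem _ (Finset.mem_univ _)
    (fun b _ hb => absurd (Subtype.ext (le_antisymm b.2.2 b.2.1)) hb)

lemma sum_empty_itv {ρ σ : X} (h : ¬ ρ ≤ σ) (f : Itv ρ σ → M') :
    (∑ τ : Itv ρ σ, f τ) = 0 := by
  haveI : IsEmpty (Itv ρ σ) := ⟨fun τ => h (τ.2.1.trans τ.2.2)⟩
  rw [Finset.univ_eq_empty, Finset.sum_empty]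

lemma interval_swap (ρ σ : X) (f : X → X → M') :
    (∑ τ : Itv ρ σ, ∑ μ : Itv τ.1 σ, f μ.1 τ.1)
      = ∑ μ : Itv ρ σ, ∑ τ : Itv ρ μ.1, f μ.1 τ.1 := by
  let e : (Σ τ : Itv ρ σ, Itv τ.1 σ) ≃ (Σ μ : Itv ρ σ, Itv ρ μ.1) :=
    { toFun := fun x => ⟨⟨x.2.1, x.1.2.1.trans x.2.2.1, x.2.2.2⟩, ⟨x.1.1, x.1.2.1, x.2.2.1⟩⟩
      invFun := fun y => ⟨⟨y.2.1, y.2.2.1, y.2.2.2.trans y.1.2.2⟩, ⟨y.1.1, y.2.2.2, y.1.2.2⟩⟩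
      left_inv := fun x => rfl
      right_inv := fun y => rfl }
  calc (∑ τ : Itv ρ σ, ∑ μ : Itv τ.1 σ, f μ.1 τ.1)
      = ∑ x : Σ τ : Itv ρ σ, Itv τ.1 σ, f x.2.1 x.1.1 := by
        rw [← Finset.univ_sigma_univ, Finset.sum_sigma]
    _ = ∑ y : Σ μ : Itv ρ σ, Itv ρ μ.1, f y.1.1 y.2.1 :=
        Fintype.sum_equiv e _ _ (fun x => rfl)
    _ = ∑ μ : Itv ρ σ, ∑ τ : Itv ρ μ.1, f μ.1 τ.1 := by
        rw [← Finset.univ_sigma_univ, Finset.sum_sigma]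

lemma sum_split_top {ρ σ : X} (hρσ : ρ ≤ σ) (F : X → M') :
    (∑ τ : Itv ρ σ, F τ.1)
      = F σ + ∑ τ : Itv ρ σ, (if τ.1 = σ then 0 else F τ.1) := by
  have h1 : (∑ τ : Itv ρ σ, (if τ.1 = σ then F τ.1 else 0)) = F σ := by
    refine (Finset.sum_eq_single_of_mem (⟨σ, hρσ, le_refl σ⟩ : Itv ρ σ)
      (Finset.mem_univ _) ?_).trans (by simp)
    intro b _ hb; exact if_neg (fun hc => hb (Subtype.ext hc))
  calc (∑ τ : Itv ρ σ, F τ.1)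
      = ∑ τ : Itv ρ σ, ((if τ.1 = σ then F τ.1 else 0) + (if τ.1 = σ then 0 else F τ.1)) :=
        Finset.sum_congr rfl (fun τ _ => by by_cases h : τ.1 = σ <;> simp [h])
    _ = _ := by rw [Finset.sum_add_distrib, h1]

lemma sum_split_bot {ρ σ : X} (hρσ : ρ ≤ σ) (F : X → M') :
    (∑ τ : Itv ρ σ, F τ.1)
      = F ρ + ∑ τ : Itv ρ σ, (if τ.1 = ρ then 0 else F τ.1) := by
  have h1 : (∑ τ : Itv ρ σ, (if τ.1 = ρ then F τ.1 else 0)) = F ρ := by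
    refine (Finset.sum_eq_single_of_mem (⟨ρ, le_refl ρ, hρσ⟩ : Itv ρ σ)
      (Finset.mem_univ _) ?_).trans (by simp)
    intro b _ hb; exact if_neg (fun hc => hb (Subtype.ext hc))
  calc (∑ τ : Itv ρ σ, F τ.1)
      = ∑ τ : Itv ρ σ, ((if τ.1 = ρ then F τ.1 else 0) + (if τ.1 = ρ then 0 else F τ.1)) :=
        Finset.sum_congr rfl (fun τ _ => by by_cases h : τ.1 = ρ <;> simp [h])
    _ = _ := by rw [Finset.sum_add_distrib, h1]

lemma card_lt_top {ρ τ σ : X} (hρτ : ρ ≤ τ) (hτσ : τ ≤ σ) (hne : τ ≠ σ) :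
    Fintype.card (Itv ρ τ) < Fintype.card (Itv ρ σ) := by
  refine Fintype.card_lt_of_injective_of_notMem
    (fun μ => ⟨μ.1, μ.2.1, μ.2.2.trans hτσ⟩) ?_ (b := ⟨σ, hρτ.trans hτσ, le_refl σ⟩) ?_
  · intro x y hxy
    have h2 := Subtype.ext_iff.mp hxy
    exact Subtype.ext h2
  · rintro ⟨μ, hμ⟩
    have h1 : μ.1 = σ := Subtype.ext_iff.mp hμ
    exact hne (le_antisymm hτσ (h1 ▸ μ.2.2))

lemma card_lt_bot {ρ τ σ : X} (hρτ : ρ ≤ τ) (hτσ : τ ≤ σ) (hne : τ ≠ ρ) :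
    Fintype.card (Itv τ σ) < Fintype.card (Itv ρ σ) := by
  refine Fintype.card_lt_of_injective_of_notMem
    (fun μ => ⟨μ.1, hρτ.trans μ.2.1, μ.2.2⟩) ?_ (b := ⟨ρ, le_refl ρ, hρτ.trans hτσ⟩) ?_
  · intro x y hxy
    have h2 := Subtype.ext_iff.mp hxy
    exact Subtype.ext h2
  · rintro ⟨μ, hμ⟩
    have h1 : μ.1 = ρ := Subtype.ext_iff.mp hμ
    exact hne (le_antisymm (h1 ▸ μ.2.1) hρτ)

end Sums

/-- Matrices of morphisms between `X`-graded families of objects. -/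
def Mat (a b : X → A) : Type _ := ∀ σ τ : X, a σ ⟶ b τ

instance (a b : X → A) : AddCommGroup (Mat a b) := by
  unfold Mat; infer_instance

/-- Triangular matrix product over intervals. -/
def mul {a b c : X → A} (M : Mat a b) (N : Mat b c) : Mat a c :=
  fun σ ρ => ∑ τ : Itv ρ σ, M σ τ.1 ≫ N τ.1 ρ

/-- The identity matrix. -/
noncomputable def one (a : X → A) : Mat a a :=
  fun σ τ => if h : τ = σ then eqToHom (by rw [h]) else 0

/-- Triangularity (support on `τ ≤ σ`). -/
def Tri {a b : X → A} (M : Mat a b) : Prop := ∀ σ τ : X, ¬ τ ≤ σ → M σ τ = 0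

lemma one_diag (a : X → A) (σ : X) : one a σ σ = 𝟙 (a σ) := by
  simp [one]

lemma tri_mul {a b c : X → A} (M : Mat a b) (N : Mat b c) : Tri (mul M N) :=
  fun σ τ h => sum_empty_itv h _

lemma tri_one (a : X → A) : Tri (one a) := by
  intro σ τ h
  rw [one, dif_neg (fun hc => h (le_of_eq hc))]

lemma tri_add {a b : X → A} {M N : Mat a b} (hM : Tri M) (hN : Tri N) : Tri (M + N) := by
  intro σ τ h
  have : (M + N) σ τ = M σ τ + N σ τ := rfl
  rw [this, hM _ _ h, hN _ _ h, add_zero]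

lemma mul_assoc {a b c e : X → A} (M : Mat a b) (N : Mat b c) (K : Mat c e) :
    mul (mul M N) K = mul M (mul N K) := by
  funext σ ρ
  show (∑ τ : Itv ρ σ, (∑ μ : Itv τ.1 σ, M σ μ.1 ≫ N μ.1 τ.1) ≫ K τ.1 ρ)
    = ∑ μ : Itv ρ σ, M σ μ.1 ≫ ∑ τ : Itv ρ μ.1, N μ.1 τ.1 ≫ K τ.1 ρ
  calc (∑ τ : Itv ρ σ, (∑ μ : Itv τ.1 σ, M σ μ.1 ≫ N μ.1 τ.1) ≫ K τ.1 ρ)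
      = ∑ τ : Itv ρ σ, ∑ μ : Itv τ.1 σ, M σ μ.1 ≫ (N μ.1 τ.1 ≫ K τ.1 ρ) := by
        simp [Preadditive.sum_comp, Category.assoc]
    _ = ∑ μ : Itv ρ σ, ∑ τ : Itv ρ μ.1, M σ μ.1 ≫ (N μ.1 τ.1 ≫ K τ.1 ρ) :=
        interval_swap ρ σ (fun μ τ => M σ μ ≫ (N μ τ ≫ K τ ρ))
    _ = ∑ μ : Itv ρ σ, M σ μ.1 ≫ ∑ τ : Itv ρ μ.1, N μ.1 τ.1 ≫ K τ.1 ρ := by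
        simp [Preadditive.comp_sum]

lemma one_mul {a b : X → A} (M : Mat a b) (hM : Tri M) : mul (one a) M = M := by
  funext σ ρ
  by_cases hle : ρ ≤ σ
  · refine (Finset.sum_eq_single_of_mem (⟨σ, hle, le_refl σ⟩ : Itv ρ σ)
      (Finset.mem_univ _) ?_).trans ?_
    · intro b' _ hb
      rw [one, dif_neg (fun hc => hb (Subtype.ext hc)), Limits.zero_comp]
    · rw [one_diag, Category.id_comp]
  · exact (sum_empty_itv hle _).trans (hM _ _ hle).symm

lemma mul_one {a b : X → A} (M : Mat a b) (hM : Tri M) : mul M (one b) = M := by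
  funext σ ρ
  by_cases hle : ρ ≤ σ
  · refine (Finset.sum_eq_single_of_mem (⟨ρ, le_refl ρ, hle⟩ : Itv ρ σ)
      (Finset.mem_univ _) ?_).trans ?_
    · intro b' _ hb
      rw [one, dif_neg (fun hc => hb (Subtype.ext hc.symm)), Limits.comp_zero]
    · rw [one_diag, Category.comp_id]
  · exact (sum_empty_itv hle _).trans (hM _ _ hle).symm

lemma mul_add {a b c : X → A} (M : Mat a b) (N K : Mat b c) :
    mul M (N + K) = mul M N + mul M K := by
  funext σ ρ
  show (∑ τ : Itv ρ σ, M σ τ.1 ≫ (N τ.1 ρ + K τ.1 ρ)) = _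
  rw [Finset.sum_congr rfl (fun τ _ => Preadditive.comp_add _ _ _ _ _ _),
    Finset.sum_add_distrib]
  rfl

lemma add_mul {a b c : X → A} (M N : Mat a b) (K : Mat b c) :
    mul (M + N) K = mul M K + mul N K := by
  funext σ ρ
  show (∑ τ : Itv ρ σ, (M σ τ.1 + N σ τ.1) ≫ K τ.1 ρ) = _
  rw [Finset.sum_congr rfl (fun τ _ => Preadditive.add_comp _ _ _ _ _ _),
    Finset.sum_add_distrib]
  rfl

lemma zero_mul' {a b c : X → A} (M : Mat b c) : mul (0 : Mat a b) M = 0 := by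
  funext σ ρ
  show (∑ τ : Itv ρ σ, (0 : a σ ⟶ b τ.1) ≫ M τ.1 ρ) = 0
  simp

lemma mul_zero {a b c : X → A} (M : Mat a b) : mul M (0 : Mat b c) = 0 := by
  funext σ ρ
  show (∑ τ : Itv ρ σ, M σ τ.1 ≫ (0 : b τ.1 ⟶ c ρ)) = 0
  simp

section Complex

variable (C : GCx X A) (p : ∀ σ : X, LocalContraction C σ)

/-- The differential as a matrix. -/
def dM (i j : ℤ) : Mat (C.ob i) (C.ob j) := fun σ τ => C.d i j σ τ

lemma tri_dM (i j : ℤ) : Tri (dM C i j) := by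
  intro σ τ h
  exact C.shape i j σ τ (fun hc => h hc.1)

lemma dd (i j k : ℤ) (hj : j = i - 1) (hk : k = j - 1) :
    mul (dM C i j) (dM C j k) = 0 := by
  subst hj; subst hk
  funext σ ρ
  exact C.dsq i σ ρ

/-- The diagonal local contraction as a matrix. -/
noncomputable def PM (i j : ℤ) : Mat (C.ob i) (C.ob j) :=
  fun σ τ => if h : τ = σ then (p σ).P i j ≫ eqToHom (by rw [h]) else 0

lemma tri_PM (i j : ℤ) : Tri (PM C p i j) := by
  intro σ τ h
  rw [PM, dif_neg (fun hc => h (le_of_eq hc))]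

lemma PM_diag (i j : ℤ) (σ : X) : PM C p i j σ σ = (p σ).P i j := by
  simp [PM]

/-- `Δ = dP + Pd`. -/
noncomputable def ΔM (i : ℤ) : Mat (C.ob i) (C.ob i) :=
  mul (dM C i (i - 1)) (PM C p (i - 1) i) + mul (PM C p i (i + 1)) (dM C (i + 1) i)

lemma tri_ΔM (i : ℤ) : Tri (ΔM C p i) :=
  tri_add (tri_mul _ _) (tri_mul _ _)

lemma ΔM_diag (i : ℤ) (σ : X) : ΔM C p i σ σ = 𝟙 (C.ob i σ) := by
  show (mul (dM C i (i - 1)) (PM C p (i - 1) i)) σ σ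
      + (mul (PM C p i (i + 1)) (dM C (i + 1) i)) σ σ = 𝟙 (C.ob i σ)
  rw [mul, mul, sum_diag, sum_diag]
  show C.d i (i - 1) σ σ ≫ PM C p (i - 1) i σ σ
      + PM C p i (i + 1) σ σ ≫ C.d (i + 1) i σ σ = 𝟙 (C.ob i σ)
  rw [PM_diag, PM_diag]
  exact (p σ).contr i

lemma ΔM_d (i j : ℤ) (hj : j = i - 1) :
    mul (ΔM C p i) (dM C i j) = mul (dM C i j) (ΔM C p j) := by
  subst hj
  rw [ΔM, ΔM, add_mul, mul_add]
  rw [mul_assoc (PM C p i (i + 1)) (dM C (i + 1) i) (dM C i (i - 1)),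
    dd C (i + 1) i (i - 1) (by omega) (by omega), mul_zero, add_zero]
  rw [← mul_assoc (dM C i (i - 1)) (dM C (i - 1) (i - 1 - 1)) (PM C p (i - 1 - 1) (i - 1)),
    dd C i (i - 1) (i - 1 - 1) rfl rfl, zero_mul', zero_add]
  have hi : i - 1 + 1 = i := by omega
  rw [hi, ← mul_assoc]

/-- The inverse of `Δ`, defined by triangular recursion (solving `Δ Q = 1`). -/
noncomputable def Qc (i : ℤ) (σ ρ : X) : C.ob i σ ⟶ C.ob i ρ :=
  if h : ρ = σ then eqToHom (by rw [h])
  else if hle : ρ ≤ σ then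
    - ∑ τ : Itv ρ σ, (if h2 : τ.1 = σ then 0 else ΔM C p i σ τ.1 ≫ Qc i τ.1 ρ)
  else 0
termination_by Fintype.card (Itv ρ σ)
decreasing_by exact card_lt_top τ.2.1 τ.2.2 h2

/-- `Q` as a matrix. -/
noncomputable def QM (i : ℤ) : Mat (C.ob i) (C.ob i) := fun σ ρ => Qc C p i σ ρ

lemma Qc_diag (i : ℤ) (σ : X) : Qc C p i σ σ = 𝟙 (C.ob i σ) := by
  rw [Qc, dif_pos rfl]
  simp

lemma tri_QM (i : ℤ) : Tri (QM C p i) := by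
  intro σ ρ h
  show Qc C p i σ ρ = 0
  rw [Qc, dif_neg (fun hc => h (le_of_eq hc)), dif_neg h]

lemma ΔQ (i : ℤ) : mul (ΔM C p i) (QM C p i) = one (C.ob i) := by
  funext σ ρ
  show (∑ τ : Itv ρ σ, ΔM C p i σ τ.1 ≫ Qc C p i τ.1 ρ) = one (C.ob i) σ ρ
  by_cases hle : ρ ≤ σ
  · rw [sum_split_top hle (fun τ => ΔM C p i σ τ ≫ Qc C p i τ ρ)]
    by_cases h : ρ = σ
    · subst h
      rw [ΔM_diag, Qc_diag, Category.id_comp, one_diag]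
      rw [Finset.sum_eq_zero, add_zero]
      intro τ _
      rw [if_pos (le_antisymm τ.2.2 τ.2.1)]
    · rw [ΔM_diag, Category.id_comp, one, dif_neg h]
      rw [Qc, dif_neg h, dif_pos hle]
      rw [neg_add_eq_zero]
      refine Finset.sum_congr rfl (fun τ _ => ?_)
      by_cases h2 : τ.1 = σ
      · rw [dif_pos h2, if_pos h2]
      · rw [dif_neg h2, if_neg h2]
  · rw [sum_empty_itv hle, one, dif_neg (fun hc => hle (le_of_eq hc))]

/-- The inverse of `Δ` from the other side. -/
noncomputable def Qc' (i : ℤ) (σ ρ : X) : C.ob i σ ⟶ C.ob i ρ :=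
  if h : ρ = σ then eqToHom (by rw [h])
  else if hle : ρ ≤ σ then
    - ∑ τ : Itv ρ σ, (if h2 : τ.1 = ρ then 0 else Qc' i σ τ.1 ≫ ΔM C p i τ.1 ρ)
  else 0
termination_by Fintype.card (Itv ρ σ)
decreasing_by exact card_lt_bot τ.2.1 τ.2.2 h2

noncomputable def QM' (i : ℤ) : Mat (C.ob i) (C.ob i) := fun σ ρ => Qc' C p i σ ρ

lemma Qc'_diag (i : ℤ) (σ : X) : Qc' C p i σ σ = 𝟙 (C.ob i σ) := by
  rw [Qc', dif_pos rfl]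
  simp

lemma tri_QM' (i : ℤ) : Tri (QM' C p i) := by
  intro σ ρ h
  show Qc' C p i σ ρ = 0
  rw [Qc', dif_neg (fun hc => h (le_of_eq hc)), dif_neg h]

lemma Q'Δ (i : ℤ) : mul (QM' C p i) (ΔM C p i) = one (C.ob i) := by
  funext σ ρ
  show (∑ τ : Itv ρ σ, Qc' C p i σ τ.1 ≫ ΔM C p i τ.1 ρ) = one (C.ob i) σ ρ
  by_cases hle : ρ ≤ σ
  · rw [sum_split_bot hle (fun τ => Qc' C p i σ τ ≫ ΔM C p i τ ρ)]
    by_cases h : ρ = σ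
    · subst h
      rw [ΔM_diag, Qc'_diag, Category.id_comp, one_diag]
      rw [Finset.sum_eq_zero, add_zero]
      intro τ _
      rw [if_pos (le_antisymm τ.2.2 τ.2.1)]
    · rw [ΔM_diag, Category.comp_id, one, dif_neg h]
      rw [Qc', dif_neg h, dif_pos hle]
      rw [neg_add_eq_zero]
      refine Finset.sum_congr rfl (fun τ _ => ?_)
      by_cases h2 : τ.1 = ρ
      · rw [dif_pos h2, if_pos h2]
      · rw [dif_neg h2, if_neg h2]
  · rw [sum_empty_itv hle, one, dif_neg (fun hc => hle (le_of_eq hc))]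

lemma QM'_eq (i : ℤ) : QM' C p i = QM C p i := by
  calc QM' C p i = mul (QM' C p i) (one (C.ob i)) := (mul_one _ (tri_QM' C p i)).symm
    _ = mul (QM' C p i) (mul (ΔM C p i) (QM C p i)) := by rw [ΔQ]
    _ = mul (mul (QM' C p i) (ΔM C p i)) (QM C p i) := (mul_assoc _ _ _).symm
    _ = mul (one (C.ob i)) (QM C p i) := by rw [Q'Δ]
    _ = QM C p i := one_mul _ (tri_QM C p i)

lemma QΔ (i : ℤ) : mul (QM C p i) (ΔM C p i) = one (C.ob i) := by
  rw [← QM'_eq C p i]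
  exact Q'Δ C p i

lemma Q_d (i j : ℤ) (hj : j = i - 1) :
    mul (dM C i j) (QM C p j) = mul (QM C p i) (dM C i j) := by
  subst hj
  calc mul (dM C i (i - 1)) (QM C p (i - 1))
      = mul (one (C.ob i)) (mul (dM C i (i - 1)) (QM C p (i - 1))) :=
        (one_mul _ (tri_mul _ _)).symm
    _ = mul (mul (QM C p i) (ΔM C p i)) (mul (dM C i (i - 1)) (QM C p (i - 1))) := by
        rw [QΔ]
    _ = mul (QM C p i) (mul (mul (ΔM C p i) (dM C i (i - 1))) (QM C p (i - 1))) := by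
        rw [mul_assoc, mul_assoc]
    _ = mul (QM C p i) (mul (mul (dM C i (i - 1)) (ΔM C p (i - 1))) (QM C p (i - 1))) := by
        rw [ΔM_d C p i (i - 1) rfl]
    _ = mul (QM C p i) (mul (dM C i (i - 1)) (mul (ΔM C p (i - 1)) (QM C p (i - 1)))) := by
        rw [mul_assoc]
    _ = mul (QM C p i) (dM C i (i - 1)) := by
        rw [ΔQ, mul_one _ (tri_dM C i (i - 1))]

/-- The global contraction matrix at degree `i`: `P' = P Q`. -/
noncomputable def PQ (i : ℤ) : Mat (C.ob i) (C.ob (i + 1)) :=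
  mul (PM C p i (i + 1)) (QM C p (i + 1))

lemma key (i : ℤ) :
    mul (dM C i (i - 1)) (mul (PM C p (i - 1) i) (QM C p i))
      + mul (mul (PM C p i (i + 1)) (QM C p (i + 1))) (dM C (i + 1) i)
    = one (C.ob i) := by
  have h1 : mul (mul (PM C p i (i + 1)) (QM C p (i + 1))) (dM C (i + 1) i)
      = mul (mul (PM C p i (i + 1)) (dM C (i + 1) i)) (QM C p i) := by
    rw [mul_assoc, mul_assoc, Q_d C p (i + 1) i (by omega)]
  rw [h1, ← mul_assoc (dM C i (i - 1)) (PM C p (i - 1) i) (QM C p i),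
    ← add_mul, ← ΔM, ΔQ]

end Complex

end Stmt4Aux

/-- a finite chain complex `C` in `A*(X)` is chain contractible in `A*(X)`
if and only if each local chain complex `C(σ)` is chain contractible in `A`. -/
theorem stmt4 (C : GCx X A) :
    Nonempty (GlobalContraction C) ↔ ∀ σ : X, Nonempty (LocalContraction C σ) := by
  constructor
  · rintro ⟨G⟩ σ
    refine ⟨⟨fun i j => G.P i j σ σ, fun i j h => G.shape i j σ σ (fun hc => h hc.2),
      fun i => ?_⟩⟩
    have hc := G.contr i σ σ
    rw [Stmt4Aux.sum_diag, Stmt4Aux.sum_diag] at hc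
    simpa using hc
  · intro h
    have p : ∀ σ : X, LocalContraction C σ := fun σ => (h σ).some
    refine ⟨⟨fun i j σ τ =>
      if hj : j = i + 1 then Stmt4Aux.mul (Stmt4Aux.PM C p i j) (Stmt4Aux.QM C p j) σ τ
      else 0, ?_, ?_⟩⟩
    · intro i j σ τ hs
      show (if hj : j = i + 1 then Stmt4Aux.mul (Stmt4Aux.PM C p i j) (Stmt4Aux.QM C p j) σ τ
        else 0) = 0
      by_cases hj : j = i + 1
      · rw [dif_pos hj]
        exact Stmt4Aux.tri_mul _ _ σ τ (fun hle => hs ⟨hle, hj⟩)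
      · rw [dif_neg hj]
    · intro i σ ρ
      have h1 : ∀ τ' ρ' : X,
          (if hj : i = (i - 1) + 1 then
              Stmt4Aux.mul (Stmt4Aux.PM C p (i - 1) i) (Stmt4Aux.QM C p i) τ' ρ'
            else 0)
          = Stmt4Aux.mul (Stmt4Aux.PM C p (i - 1) i) (Stmt4Aux.QM C p i) τ' ρ' :=
        fun τ' ρ' => dif_pos (by omega)
      have h2 : ∀ σ' τ' : X,
          (if hj : i + 1 = i + 1 then
              Stmt4Aux.mul (Stmt4Aux.PM C p i (i + 1)) (Stmt4Aux.QM C p (i + 1)) σ' τ'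
            else 0)
          = Stmt4Aux.mul (Stmt4Aux.PM C p i (i + 1)) (Stmt4Aux.QM C p (i + 1)) σ' τ' :=
        fun σ' τ' => dif_pos rfl
      have hkey := congrFun (congrFun (Stmt4Aux.key C p i) σ) ρ
      calc (∑ τ : {τ : X // ρ ≤ τ ∧ τ ≤ σ}, C.d i (i - 1) σ τ.1 ≫
              (if hj : i = (i - 1) + 1 then
                Stmt4Aux.mul (Stmt4Aux.PM C p (i - 1) i) (Stmt4Aux.QM C p i) τ.1 ρ
              else 0))
            + (∑ τ : {τ : X // ρ ≤ τ ∧ τ ≤ σ},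
              (if hj : i + 1 = i + 1 then
                Stmt4Aux.mul (Stmt4Aux.PM C p i (i + 1)) (Stmt4Aux.QM C p (i + 1)) σ τ.1
              else 0) ≫ C.d (i + 1) i τ.1 ρ)
          = Stmt4Aux.mul (Stmt4Aux.dM C i (i - 1))
              (Stmt4Aux.mul (Stmt4Aux.PM C p (i - 1) i) (Stmt4Aux.QM C p i)) σ ρ
            + Stmt4Aux.mul
              (Stmt4Aux.mul (Stmt4Aux.PM C p i (i + 1)) (Stmt4Aux.QM C p (i + 1)))
              (Stmt4Aux.dM C (i + 1) i) σ ρ := by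
            congr 1
            · exact Finset.sum_congr rfl (fun τ _ => by rw [h1]; rfl)
            · exact Finset.sum_congr rfl (fun τ _ => by rw [h2]; rfl)
        _ = Stmt4Aux.one (C.ob i) σ ρ := hkey
        _ = if h : ρ = σ then eqToHom (by rw [h]) else 0 := rfl
end

section
/- Let X be a metric space, n ≥ 1, and define v_i = i for i ≤ 0 and v_i = Σ_{j=0}^{i-1} ((n+2)/(n+1))^j for i > 0. Define the exponential translation t^{-1}: X × ℝ → X × ℝ by mapping (x, s·v_i + (1−s)·v_{i+1}) to (x, s·v_{i−1} + (1−s)·v_i) for s ∈ [0,1]. Then for all z₁, z₂ ∈ X × [1, ∞), d_{O(X_+)}(t^{-1}(z₁), t^{-1}(z₂)) ≤ ((n+1)/(n+2)) · d_{O(X_+)}(z₁, z₂). -/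
/-- The open cone distance formula on `X × ℝ`. -/
noncomputable def coneDist {X : Type*} [PseudoMetricSpace X] (z w : X × ℝ) : ℝ :=
  max (min z.2 w.2) 0 * dist z.1 w.1 + |z.2 - w.2|

/-- The subdivision points: v_i = i for i ≤ 0 and v_i = Σ_{j=0}^{i-1} ((n+2)/(n+1))^j
for i > 0. -/
noncomputable def vpt (n : ℕ) (i : ℤ) : ℝ :=
  if 0 < i then ∑ j ∈ Finset.range i.toNat, (((n : ℝ) + 2) / ((n : ℝ) + 1)) ^ j
  else (i : ℝ)

lemma vpt_succ (n : ℕ) (i : ℤ) (hi : 1 ≤ i) :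
    vpt n i = 1 + (((n : ℝ) + 2) / ((n : ℝ) + 1)) * vpt n (i - 1) := by
  rcases lt_or_eq_of_le hi with h | h
  · unfold vpt
    rw [if_pos (by omega), if_pos (by omega)]
    have h1 : i.toNat = (i - 1).toNat + 1 := by omega
    rw [h1, geom_sum_succ]
    ring
  · rw [← h]
    norm_num [vpt]

/-- the exponential translation t^{-1}, mapping the point
(x, s·v_{i} + (1−s)·v_{i+1}) to (x, s·v_{i−1} + (1−s)·v_{i}), contracts the open cone
metric on X × [1,∞) by the factor (n+1)/(n+2). -/
theorem stmt10 (n : ℕ) (hn : 1 ≤ n) (X : Type*) [MetricSpace X]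
    (x₁ x₂ : X) (i₁ i₂ : ℤ) (hi₁ : 1 ≤ i₁) (hi₂ : 1 ≤ i₂)
    (s₁ s₂ : ℝ) (hs₁ : s₁ ∈ Set.Icc (0 : ℝ) 1) (hs₂ : s₂ ∈ Set.Icc (0 : ℝ) 1) :
    coneDist (x₁, s₁ * vpt n (i₁ - 1) + (1 - s₁) * vpt n i₁)
        (x₂, s₂ * vpt n (i₂ - 1) + (1 - s₂) * vpt n i₂)
      ≤ (((n : ℝ) + 1) / ((n : ℝ) + 2)) *
        coneDist (x₁, s₁ * vpt n i₁ + (1 - s₁) * vpt n (i₁ + 1))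
          (x₂, s₂ * vpt n i₂ + (1 - s₂) * vpt n (i₂ + 1)) := by
  have hn1 : (0:ℝ) < (n:ℝ) + 1 := by positivity
  have hn2 : (0:ℝ) < (n:ℝ) + 2 := by positivity
  set r : ℝ := ((n:ℝ) + 2) / ((n:ℝ) + 1) with hrdef
  set q : ℝ := ((n:ℝ) + 1) / ((n:ℝ) + 2) with hqdef
  have hq0 : 0 < q := by positivity
  have hqr : q * r = 1 := by rw [hqdef, hrdef]; field_simp
  have hA : ∀ (i : ℤ), 1 ≤ i → ∀ s : ℝ,
      s * vpt n i + (1 - s) * vpt n (i + 1)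
        = 1 + r * (s * vpt n (i - 1) + (1 - s) * vpt n i) := by
    intro i hi s
    have h1 := vpt_succ n i hi
    have h2 := vpt_succ n (i + 1) (by omega)
    simp only [add_sub_cancel_right] at h2
    rw [← hrdef] at h1 h2
    rw [h2, h1]
    ring
  set B₁ := s₁ * vpt n (i₁ - 1) + (1 - s₁) * vpt n i₁ with hB₁
  set B₂ := s₂ * vpt n (i₂ - 1) + (1 - s₂) * vpt n i₂ with hB₂
  set A₁ := s₁ * vpt n i₁ + (1 - s₁) * vpt n (i₁ + 1) with hA₁
  set A₂ := s₂ * vpt n i₂ + (1 - s₂) * vpt n (i₂ + 1) with hA₂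
  have e₁ : A₁ = 1 + r * B₁ := hA i₁ hi₁ s₁
  have e₂ : A₂ = 1 + r * B₂ := hA i₂ hi₂ s₂
  have f₁ : B₁ = q * (A₁ - 1) := by
    rw [e₁, show (1 + r * B₁ - 1) = r * B₁ by ring, ← mul_assoc, hqr, one_mul]
  have f₂ : B₂ = q * (A₂ - 1) := by
    rw [e₂, show (1 + r * B₂ - 1) = r * B₂ by ring, ← mul_assoc, hqr, one_mul]
  have habs : |B₁ - B₂| = q * |A₁ - A₂| := by
    have h : B₁ - B₂ = q * (A₁ - A₂) := by rw [f₁, f₂]; ring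
    rw [h, abs_mul, abs_of_pos hq0]
  have hmin : min B₁ B₂ = q * (min A₁ A₂ - 1) := by
    rcases le_total A₁ A₂ with h | h
    · rw [min_eq_left h, min_eq_left (show B₁ ≤ B₂ by nlinarith), f₁]
    · rw [min_eq_right h, min_eq_right (show B₂ ≤ B₁ by nlinarith), f₂]
  have hmax : max (min B₁ B₂) 0 ≤ q * max (min A₁ A₂) 0 := by
    rw [hmin]
    apply max_le
    · have h1 : min A₁ A₂ - 1 ≤ max (min A₁ A₂) 0 :=
        le_trans (by linarith) (le_max_left _ _)
      exact mul_le_mul_of_nonneg_left h1 hq0.le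
    · positivity
  show max (min B₁ B₂) 0 * dist x₁ x₂ + |B₁ - B₂|
      ≤ q * (max (min A₁ A₂) 0 * dist x₁ x₂ + |A₁ - A₂|)
  calc max (min B₁ B₂) 0 * dist x₁ x₂ + |B₁ - B₂|
      ≤ q * max (min A₁ A₂) 0 * dist x₁ x₂ + q * |A₁ - A₂| :=
        add_le_add (mul_le_mul_of_nonneg_right hmax dist_nonneg) habs.le
    _ = q * (max (min A₁ A₂) 0 * dist x₁ x₂ + |A₁ - A₂|) := by ring
end

section
/- Let X be a space with metric d and consider z₁ = (x,s), z₂ = (y,t) ∈ X × [1,∞) ⊂ O(X_+) with s ≥ t, and m ≥ 1. Then the convex combination w = (1/(m+1))·z₁ + (m/(m+1))·z₂ satisfies d_{O(X_+)}(z₁, w) ≤ (1 + (s−t)/((m+1)t)) · (m/(m+1)) · d_{O(X_+)}(z₁, z₂). -/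
/-- for z₁ = (x,s), z₂ = (y,t) in X × [1,∞) ⊂ O(X₊) with s ≥ t (X a convex
subset of a normed space), the convex combination w = (1/(m+1))·z₁ + (m/(m+1))·z₂
satisfies d_{O(X₊)}(z₁,w) ≤ (1 + (s−t)/((m+1)t)) · (m/(m+1)) · d_{O(X₊)}(z₁,z₂). -/
theorem stmt13 (E : Type*) [NormedAddCommGroup E] [NormedSpace ℝ E]
    (X : Set E) (hX : Convex ℝ X) (x y : E) (hx : x ∈ X) (hy : y ∈ X)
    (s t : ℝ) (hs : 1 ≤ s) (ht : 1 ≤ t) (hst : t ≤ s) (m : ℕ) (hm : 1 ≤ m) :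
    coneDist (x, s)
        ((1 / ((m : ℝ) + 1)) • x + ((m : ℝ) / ((m : ℝ) + 1)) • y,
          (1 / ((m : ℝ) + 1)) * s + ((m : ℝ) / ((m : ℝ) + 1)) * t)
      ≤ (1 + (s - t) / (((m : ℝ) + 1) * t)) * ((m : ℝ) / ((m : ℝ) + 1)) *
        coneDist (x, s) (y, t) := by
  have hm1 : (0:ℝ) < (m : ℝ) + 1 := by positivity
  have hmr : (1:ℝ) ≤ (m : ℝ) := by exact_mod_cast hm
  have ht0 : (0:ℝ) < t := lt_of_lt_of_le one_pos ht
  set a : ℝ := 1 / ((m : ℝ) + 1) with ha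
  set b : ℝ := (m : ℝ) / ((m : ℝ) + 1) with hb
  have hab : a + b = 1 := by rw [ha, hb]; field_simp; ring
  have hb0 : 0 < b := div_pos (by linarith) hm1
  have hdist : dist x (a • x + b • y) = b * dist x y := by
    rw [dist_eq_norm, dist_eq_norm,
      show x - (a • x + b • y) = b • (x - y) by
        rw [show a = 1 - b by linarith]; module,
      norm_smul, Real.norm_eq_abs, abs_of_pos hb0]
  have ha0 : 0 < a := by positivity
  have habt : a * t + b * t = t := by nlinarith [hab]
  have habs : a * s + b * s = s := by nlinarith [hab]
  have hw1 : t ≤ a * s + b * t := by nlinarith [mul_le_mul_of_nonneg_left hst ha0.le]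
  have hw2 : a * s + b * t ≤ s := by nlinarith [mul_le_mul_of_nonneg_left hst hb0.le]
  set c : ℝ := (s - t) / (((m : ℝ) + 1) * t) with hc
  have hc0 : 0 ≤ c := div_nonneg (by linarith) (by positivity)
  have hct : c * t = a * (s - t) := by
    rw [hc, ha]; field_simp
  set d : ℝ := dist x y with hd
  have hd0 : 0 ≤ d := dist_nonneg
  simp only [coneDist, hdist, ← hd]
  rw [min_eq_right hw2, min_eq_right hst,
    max_eq_left (by linarith : (0:ℝ) ≤ a * s + b * t),
    max_eq_left (by linarith : (0:ℝ) ≤ t),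
    abs_of_nonneg (by linarith : (0:ℝ) ≤ s - (a * s + b * t)),
    abs_of_nonneg (by linarith : (0:ℝ) ≤ s - t)]
  have h2 : b * d * (c * t) = b * d * (a * (s - t)) := by rw [hct]
  have h3 : b * d * t * (a + b) = b * d * t * 1 := by rw [hab]
  nlinarith [mul_nonneg (mul_nonneg hb0.le hc0) (sub_nonneg.2 hst), h2, h3, habs, habt]
end

section
/- Let τ be a simplex in X × [1, ∞) ⊂ O(X_+) contained in a block X × [v_i, v_{i+1}] with i ≥ 1 (where v_i = (n+1)(((n+2)/(n+1))^i − 1) and n = dim(X)+1, |τ| ≤ n). Then every simplex of the barycentric subdivision of τ has diameter, measured in the open cone metric, at most (1 − 1/((|τ|+1)^3)) times the diameter of τ. -/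
/-- The diameter of a subset of X × ℝ measured in the open cone metric. -/
noncomputable def coneDiam {X : Type*} [PseudoMetricSpace X] (s : Set (X × ℝ)) : ℝ :=
  sSup ((fun zw : (X × ℝ) × (X × ℝ) => coneDist zw.1 zw.2) '' (s ×ˢ s))

lemma coneDist_comm' {X : Type*} [PseudoMetricSpace X] (z w : X × ℝ) :
    coneDist z w = coneDist w z := by
  simp [coneDist, min_comm, dist_comm, abs_sub_comm]

lemma coneDist_nonneg' {X : Type*} [PseudoMetricSpace X] (z w : X × ℝ) :
    0 ≤ coneDist z w :=
  add_nonneg (mul_nonneg (le_max_right _ _) dist_nonneg) (abs_nonneg _)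

lemma vpt_facts (n : ℕ) (i : ℤ) (hi : 1 ≤ i) :
    1 ≤ vpt n i ∧ vpt n (i + 1) - vpt n i ≤ (((n : ℝ) + 2) / ((n : ℝ) + 1)) * vpt n i := by
  have hipos : (0 : ℤ) < i := hi
  have h1 : (0 : ℤ) < i + 1 := by omega
  have h2 : (i + 1).toNat = i.toNat + 1 := by omega
  have htN : 1 ≤ i.toNat := by omega
  set r : ℝ := ((n : ℝ) + 2) / ((n : ℝ) + 1) with hrdef
  have hr0 : (0 : ℝ) ≤ r := by positivity
  have hv : vpt n i = ∑ j ∈ Finset.range i.toNat, r ^ j := by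
    simp only [vpt, if_pos hipos, hrdef]
  have hV : vpt n (i + 1) = ∑ j ∈ Finset.range i.toNat, r ^ j + r ^ i.toNat := by
    simp only [vpt, if_pos h1, h2, Finset.sum_range_succ, hrdef]
  constructor
  · rw [hv]
    calc (1 : ℝ) = r ^ 0 := (pow_zero r).symm
      _ ≤ ∑ j ∈ Finset.range i.toNat, r ^ j :=
        Finset.single_le_sum (f := fun j => r ^ j) (fun j _ => pow_nonneg hr0 j)
          (Finset.mem_range.mpr (by omega))
  · rw [hv, hV]
    have hle : r ^ (i.toNat - 1) ≤ ∑ j ∈ Finset.range i.toNat, r ^ j :=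
      Finset.single_le_sum (f := fun j => r ^ j) (fun j _ => pow_nonneg hr0 j)
        (Finset.mem_range.mpr (by omega))
    have hpow : r ^ i.toNat = r * r ^ (i.toNat - 1) := by
      rw [← pow_succ']
      congr 1
      omega
    have h3 := mul_le_mul_of_nonneg_left hle hr0
    rw [hpow]
    linarith

/-- Any point of a subdivision simplex is a convex combination of the `p j` with weight at
least `(k+1)⁻¹` on a common vertex `j₀`. -/
lemma subdiv_decomp {E : Type*} [NormedAddCommGroup E] [NormedSpace ℝ E]
    {k l : ℕ} (p : Fin (k + 1) → E × ℝ) (S : Fin (l + 1) → Finset (Fin (k + 1)))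
    (hSne : ∀ j, (S j).Nonempty) (j₀ : Fin (k + 1)) (hj₀ : ∀ a, j₀ ∈ S a)
    {z : E × ℝ} (hz : z ∈ convexHull ℝ (Set.range fun a => Finset.centroid ℝ (S a) p)) :
    ∃ μ : Fin (k + 1) → ℝ, (∀ j, 0 ≤ μ j) ∧ (∑ j, μ j = 1) ∧ (((k : ℝ) + 1)⁻¹ ≤ μ j₀) ∧
      z = ∑ j, μ j • p j := by
  rw [convexHull_range_eq_exists_affineCombination] at hz
  obtain ⟨s, w, hw0, hw1, hzeq⟩ := hz
  have hcard0 : ∀ a, ((S a).card : ℝ) ≠ 0 := by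
    intro a
    exact_mod_cast (hSne a).card_pos.ne'
  have hcardpos : ∀ a, (0 : ℝ) < ((S a).card : ℝ) := by
    intro a
    exact_mod_cast (hSne a).card_pos
  have hcardle : ∀ a, ((S a).card : ℝ) ≤ (k : ℝ) + 1 := by
    intro a
    have h1 : (S a).card ≤ k + 1 := by
      simpa using Finset.card_le_univ (S a)
    exact_mod_cast h1
  have hc : ∀ a, Finset.centroid ℝ (S a) p = ∑ j ∈ S a, ((S a).card : ℝ)⁻¹ • p j := by
    intro a
    rw [Finset.centroid_def,
      Finset.affineCombination_eq_linear_combination _ _ _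
        (Finset.sum_centroidWeights_eq_one_of_nonempty ℝ _ (hSne a))]
    simp [Finset.centroidWeights_apply]
  refine ⟨fun j => ∑ a ∈ s, if j ∈ S a then w a * ((S a).card : ℝ)⁻¹ else 0, ?_, ?_, ?_, ?_⟩
  · intro j
    apply Finset.sum_nonneg
    intro a ha
    split
    · exact mul_nonneg (hw0 a ha) (by positivity)
    · exact le_rfl
  · rw [Finset.sum_comm]
    have hrow : ∀ a ∈ s,
        (∑ j, if j ∈ S a then w a * ((S a).card : ℝ)⁻¹ else 0) = w a := by
      intro a _
      rw [Finset.sum_ite_mem, Finset.univ_inter, Finset.sum_const, nsmul_eq_mul,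
        mul_left_comm, mul_inv_cancel₀ (hcard0 a), mul_one]
    rw [Finset.sum_congr rfl hrow, hw1]
  · show ((k : ℝ) + 1)⁻¹ ≤ ∑ a ∈ s, if j₀ ∈ S a then w a * ((S a).card : ℝ)⁻¹ else 0
    have hstep1 : ((k : ℝ) + 1)⁻¹ = ∑ a ∈ s, w a * ((k : ℝ) + 1)⁻¹ := by
      rw [← Finset.sum_mul, hw1, one_mul]
    rw [hstep1]
    apply Finset.sum_le_sum
    intro a ha
    rw [if_pos (hj₀ a)]
    apply mul_le_mul_of_nonneg_left _ (hw0 a ha)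
    exact inv_anti₀ (hcardpos a) (hcardle a)
  · show z = ∑ j, (∑ a ∈ s, if j ∈ S a then w a * ((S a).card : ℝ)⁻¹ else 0) • p j
    rw [← hzeq, Finset.affineCombination_eq_linear_combination _ _ _ hw1]
    calc ∑ a ∈ s, w a • Finset.centroid ℝ (S a) p
        = ∑ a ∈ s, ∑ j, (if j ∈ S a then w a * ((S a).card : ℝ)⁻¹ else 0) • p j := by
          apply Finset.sum_congr rfl
          intro a _
          have hite : (∑ j, (if j ∈ S a then w a * ((S a).card : ℝ)⁻¹ else 0) • p j)
              = ∑ j ∈ S a, (w a * ((S a).card : ℝ)⁻¹) • p j := by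
            simp_rw [ite_smul, zero_smul]
            rw [Finset.sum_ite_mem, Finset.univ_inter]
          rw [hite, hc a, Finset.smul_sum]
          simp_rw [smul_smul]
      _ = ∑ j, ∑ a ∈ s, (if j ∈ S a then w a * ((S a).card : ℝ)⁻¹ else 0) • p j :=
          Finset.sum_comm
      _ = ∑ j, (∑ a ∈ s, if j ∈ S a then w a * ((S a).card : ℝ)⁻¹ else 0) • p j := by
          apply Finset.sum_congr rfl
          intro j _
          rw [Finset.sum_smul]

lemma subdiv_decomp' {E : Type*} [NormedAddCommGroup E] [NormedSpace ℝ E]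
    {k l : ℕ} (hk1 : 0 < k) (p : Fin (k + 1) → E × ℝ) (S : Fin (l + 1) → Finset (Fin (k + 1)))
    (hSne : ∀ j, (S j).Nonempty) (j₀ : Fin (k + 1)) (hj₀ : ∀ a, j₀ ∈ S a)
    {z : E × ℝ} (hz : z ∈ convexHull ℝ (Set.range fun a => Finset.centroid ℝ (S a) p)) :
    ∃ zt ∈ convexHull ℝ (Set.range p),
      z = (((k : ℝ) + 1)⁻¹) • p j₀ + ((k : ℝ) / ((k : ℝ) + 1)) • zt := by
  obtain ⟨μ, hμ0, hμ1, hμj₀, hzμ⟩ := subdiv_decomp p S hSne j₀ hj₀ hz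
  have hk0R : (0 : ℝ) < (k : ℝ) := by exact_mod_cast hk1
  have hkp1 : (0 : ℝ) < (k : ℝ) + 1 := by linarith
  set θ : ℝ := (k : ℝ) / ((k : ℝ) + 1) with hθdef
  have hθ0 : 0 < θ := div_pos hk0R hkp1
  set ν : Fin (k + 1) → ℝ :=
    fun j => (μ j - if j = j₀ then ((k : ℝ) + 1)⁻¹ else 0) / θ with hνdef
  have hν0 : ∀ j, 0 ≤ ν j := by
    intro j
    simp only [hνdef]
    apply div_nonneg _ hθ0.le
    by_cases h : j = j₀
    · rw [if_pos h]
      have := h ▸ hμj₀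
      linarith
    · rw [if_neg h]
      simpa using hμ0 j
  have hsite : (∑ j : Fin (k + 1), if j = j₀ then ((k : ℝ) + 1)⁻¹ else 0)
      = ((k : ℝ) + 1)⁻¹ := by
    rw [Finset.sum_ite_eq' Finset.univ j₀ fun _ => ((k : ℝ) + 1)⁻¹,
      if_pos (Finset.mem_univ _)]
  have hν1 : ∑ j, ν j = 1 := by
    simp only [hνdef]
    rw [← Finset.sum_div, Finset.sum_sub_distrib, hμ1, hsite, hθdef]
    field_simp
    ring
  refine ⟨∑ j, ν j • p j, ?_, ?_⟩
  · have hmem : Finset.univ.centerMass ν p ∈ convexHull ℝ (Set.range p) :=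
      Finset.centerMass_mem_convexHull _ (fun j _ => hν0 j)
        (by rw [hν1]; norm_num) (fun j _ => Set.mem_range_self j)
    rwa [Finset.centerMass_eq_of_sum_1 _ _ hν1] at hmem
  · have h1 : ∀ j : Fin (k + 1), θ • (ν j • p j)
        = μ j • p j - (if j = j₀ then ((k : ℝ) + 1)⁻¹ else 0) • p j := by
      intro j
      rw [smul_smul]
      simp only [hνdef]
      rw [mul_comm, div_mul_cancel₀ _ hθ0.ne', sub_smul]
    have h2 : (∑ j : Fin (k + 1), (if j = j₀ then ((k : ℝ) + 1)⁻¹ else 0) • p j)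
        = ((k : ℝ) + 1)⁻¹ • p j₀ := by
      simp_rw [ite_smul, zero_smul]
      rw [Finset.sum_ite_eq' Finset.univ j₀ fun j => ((k : ℝ) + 1)⁻¹ • p j,
        if_pos (Finset.mem_univ _)]
    rw [hzμ, Finset.smul_sum, Finset.sum_congr rfl (fun j _ => h1 j),
      Finset.sum_sub_distrib, h2]
    abel

set_option maxHeartbeats 1600000 in
/-- for a simplex τ (of dimension k, k ≤ n = dim X + 1) linearly embedded in
X × [v_i, v_{i+1}] with i ≥ 1, every simplex of its barycentric subdivision (spanned by
the barycenters of a strict chain of faces) has diameter, measured in the open cone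
metric, at most (1 − 1/(|τ|+1)³) times the diameter of τ. -/
theorem stmt14 (E : Type*) [NormedAddCommGroup E] [NormedSpace ℝ E]
    (n : ℕ) (hn : 1 ≤ n) (i : ℤ) (hi : 1 ≤ i) (k : ℕ) (hk : k ≤ n)
    (p : Fin (k + 1) → E × ℝ) (hp : AffineIndependent ℝ p)
    (hcoord : ∀ j, (p j).2 ∈ Set.Icc (vpt n i) (vpt n (i + 1)))
    (l : ℕ) (S : Fin (l + 1) → Finset (Fin (k + 1)))
    (hS : StrictMono S) (hSne : ∀ j, (S j).Nonempty) :
    coneDiam (convexHull ℝ (Set.range fun j => Finset.centroid ℝ (S j) p))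
      ≤ (1 - 1 / (((k : ℝ) + 1) ^ 3)) * coneDiam (convexHull ℝ (Set.range p)) := by
  rcases Nat.eq_zero_or_pos k with hk0 | hk1
  · -- degenerate case k = 0 : the simplex is a single point
    subst hk0
    have hS0 : ∀ j, S j = {0} := by
      intro j
      obtain ⟨x, hx⟩ := hSne j
      apply Finset.eq_singleton_iff_unique_mem.mpr
      constructor
      · have h0 : (0 : Fin (0 + 1)) = x := by
          apply Fin.ext
          omega
        rw [h0]; exact hx
      · intro y _
        apply Fin.ext
        omega
    have hc : (fun j => Finset.centroid ℝ (S j) p) = fun _ => p 0 := by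
      funext j
      rw [hS0 j, Finset.centroid_singleton]
    rw [hc, Set.range_const, convexHull_singleton]
    have hP : (({p 0} : Set (E × ℝ)) ×ˢ ({p 0} : Set (E × ℝ))) = {(p 0, p 0)} :=
      Set.singleton_prod_singleton
    have h0 : coneDist (p 0) (p 0) = 0 := by simp [coneDist]
    have hD : coneDiam ({p 0} : Set (E × ℝ)) = 0 := by
      rw [coneDiam, hP, Set.image_singleton, h0, csSup_singleton]
    rw [hD]
    have hcoef : (1 - 1 / (((0 : ℕ) : ℝ) + 1) ^ 3) = 0 := by norm_num
    rw [hcoef, zero_mul]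
  · -- main case k ≥ 1
    obtain ⟨hv1, hVrv⟩ := vpt_facts n i hi
    set v := vpt n i
    set V := vpt n (i + 1)
    set τ : Set (E × ℝ) := convexHull ℝ (Set.range p) with hτdef
    set σ : Set (E × ℝ) :=
      convexHull ℝ (Set.range fun j => Finset.centroid ℝ (S j) p) with hσdef
    set j₀ : Fin (k + 1) := (hSne 0).choose with hj₀def
    have hj₀ : ∀ a, j₀ ∈ S a := fun a =>
      hS.monotone (Fin.zero_le a) (hSne 0).choose_spec
    -- heights of points of τ
    have hhts : ∀ u ∈ τ, v ≤ u.2 ∧ u.2 ≤ V := by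
      have hsub : τ ⊆ (LinearMap.snd ℝ E ℝ) ⁻¹' Set.Icc v V := by
        rw [hτdef]
        apply convexHull_min
        · rintro u ⟨j, rfl⟩
          exact hcoord j
        · exact (convex_Icc _ _).linear_preimage _
      intro u hu
      have := hsub hu
      simpa [Set.mem_preimage, Set.mem_Icc] using this
    -- first coordinates of points of τ are bounded
    have hne : (Finset.univ : Finset (Fin (k + 1))).Nonempty := Finset.univ_nonempty
    set R : ℝ := Finset.univ.sup' hne fun j => ‖(p j).1‖ with hRdef
    have hfst : ∀ u ∈ τ, ‖u.1‖ ≤ R := by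
      have hsub : τ ⊆ (LinearMap.fst ℝ E ℝ) ⁻¹' Metric.closedBall 0 R := by
        rw [hτdef]
        apply convexHull_min
        · rintro u ⟨j, rfl⟩
          simp only [Set.mem_preimage, LinearMap.fst_apply, Metric.mem_closedBall,
            dist_zero_right]
          rw [hRdef]
          exact Finset.le_sup' (fun j => ‖(p j).1‖) (Finset.mem_univ j)
        · exact (convex_closedBall _ _).linear_preimage _
      intro u hu
      have := hsub hu
      simpa [Set.mem_preimage, mem_closedBall_zero_iff] using this
    -- the cone distances over τ × τ are bounded above
    have hbdd : BddAbove ((fun zw : (E × ℝ) × (E × ℝ) => coneDist zw.1 zw.2) '' (τ ×ˢ τ)) := by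
      refine ⟨V * (R + R) + (V - v), ?_⟩
      rintro y ⟨⟨z, w⟩, hzw, rfl⟩
      obtain ⟨hzτ, hwτ⟩ := hzw
      obtain ⟨hzv, hzV⟩ := hhts z hzτ
      obtain ⟨hwv, hwV⟩ := hhts w hwτ
      have hV0 : (0 : ℝ) ≤ V := by linarith
      have h1 : max (min z.2 w.2) 0 ≤ V := max_le (le_trans (min_le_left _ _) hzV) hV0
      have h2 : dist z.1 w.1 ≤ R + R := by
        have h3 := dist_triangle z.1 0 w.1
        rw [dist_zero_right, dist_zero_left] at h3
        have h4 := hfst z hzτ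
        have h5 := hfst w hwτ
        linarith
      have h3 : |z.2 - w.2| ≤ V - v := abs_sub_le_iff.mpr ⟨by linarith, by linarith⟩
      show coneDist z w ≤ V * (R + R) + (V - v)
      rw [coneDist]
      exact add_le_add (mul_le_mul h1 h2 dist_nonneg hV0) h3
    have hDle : ∀ a ∈ τ, ∀ b ∈ τ, coneDist a b ≤ coneDiam τ := by
      intro a ha b hb
      exact le_csSup hbdd ⟨(a, b), Set.mk_mem_prod ha hb, rfl⟩
    have hp0τ : p 0 ∈ τ := subset_convexHull ℝ _ ⟨0, rfl⟩
    have hD0 : 0 ≤ coneDiam τ :=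
      le_trans (coneDist_nonneg' (p 0) (p 0)) (hDle _ hp0τ _ hp0τ)
    -- numeric facts
    have hk0R : (0 : ℝ) < (k : ℝ) := by exact_mod_cast hk1
    have hkp1 : (0 : ℝ) < (k : ℝ) + 1 := by linarith
    have hrk : ((n : ℝ) + 2) / ((n : ℝ) + 1) ≤ ((k : ℝ) + 2) / ((k : ℝ) + 1) := by
      rw [div_le_div_iff₀ (by positivity) hkp1]
      have hkn : (k : ℝ) ≤ (n : ℝ) := by exact_mod_cast hk
      nlinarith
    have hVrk : V - v ≤ (((k : ℝ) + 2) / ((k : ℝ) + 1)) * v := by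
      calc V - v ≤ (((n : ℝ) + 2) / ((n : ℝ) + 1)) * v := hVrv
        _ ≤ (((k : ℝ) + 2) / ((k : ℝ) + 1)) * v :=
          mul_le_mul_of_nonneg_right hrk (by linarith)
    set κ : ℝ := ((k : ℝ) + 1)⁻¹ with hκdef
    set θ : ℝ := (k : ℝ) / ((k : ℝ) + 1) with hθdef
    set rk : ℝ := ((k : ℝ) + 2) / ((k : ℝ) + 1) with hrkdef
    have hκ0 : 0 ≤ κ := by positivity
    have hθ0 : 0 < θ := div_pos hk0R hkp1
    have hrk0 : 0 ≤ rk := by positivity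
    have hκθ : κ + θ = 1 := by
      rw [hκdef, hθdef]
      field_simp
      ring
    have hcoef : θ * (1 + κ * rk) = 1 - 1 / (((k : ℝ) + 1) ^ 3) := by
      rw [hκdef, hθdef, hrkdef]
      field_simp
      ring
    have hlam0 : 0 ≤ 1 - 1 / (((k : ℝ) + 1) ^ 3) := by
      rw [← hcoef]
      positivity
    -- the key pairwise estimate
    have key : ∀ z w : E × ℝ, z ∈ σ → w ∈ σ → z.2 ≤ w.2 →
        coneDist z w ≤ (1 - 1 / (((k : ℝ) + 1) ^ 3)) * coneDiam τ := by
      intro z w hzσ hwσ hzw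
      obtain ⟨a, haτ, hza⟩ := subdiv_decomp' hk1 p S hSne j₀ hj₀ hzσ
      obtain ⟨b, hbτ, hwb⟩ := subdiv_decomp' hk1 p S hSne j₀ hj₀ hwσ
      have hz1 : z.1 = κ • (p j₀).1 + θ • a.1 := by
        rw [hza, Prod.fst_add, Prod.smul_fst, Prod.smul_fst]
      have hw1 : w.1 = κ • (p j₀).1 + θ • b.1 := by
        rw [hwb, Prod.fst_add, Prod.smul_fst, Prod.smul_fst]
      have hz2 : z.2 = κ * (p j₀).2 + θ * a.2 := by
        rw [hza, Prod.snd_add, Prod.smul_snd, Prod.smul_snd, smul_eq_mul, smul_eq_mul]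
      have hw2 : w.2 = κ * (p j₀).2 + θ * b.2 := by
        rw [hwb, Prod.snd_add, Prod.smul_snd, Prod.smul_snd, smul_eq_mul, smul_eq_mul]
      obtain ⟨hav, haV⟩ := hhts a haτ
      obtain ⟨hbv, hbV⟩ := hhts b hbτ
      obtain ⟨hs₀v, hs₀V⟩ := hcoord j₀
      have hab2 : a.2 ≤ b.2 := by
        have h := hzw
        rw [hz2, hw2] at h
        nlinarith
      have ha20 : 0 ≤ a.2 := by linarith
      have hz20 : 0 ≤ z.2 := by
        rw [hz2]
        have hh1 : 0 ≤ κ * (p j₀).2 := mul_nonneg hκ0 (by linarith)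
        have hh2 : 0 ≤ θ * a.2 := mul_nonneg hθ0.le ha20
        linarith
      have hd1 : dist z.1 w.1 = θ * dist a.1 b.1 := by
        rw [dist_eq_norm, dist_eq_norm, hz1, hw1]
        have hsub : κ • (p j₀).1 + θ • a.1 - (κ • (p j₀).1 + θ • b.1)
            = θ • (a.1 - b.1) := by
          rw [smul_sub]; abel
        rw [hsub, norm_smul, Real.norm_eq_abs, abs_of_nonneg hθ0.le]
      have hd2 : z.2 - w.2 = θ * (a.2 - b.2) := by
        rw [hz2, hw2]; ring
      have habs : |z.2 - w.2| = θ * |a.2 - b.2| := by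
        rw [hd2, abs_mul, abs_of_nonneg hθ0.le]
      have hmin : max (min z.2 w.2) 0 = z.2 := by
        rw [min_eq_left hzw, max_eq_left hz20]
      have hminab : max (min a.2 b.2) 0 = a.2 := by
        rw [min_eq_left hab2, max_eq_left ha20]
      set dA : ℝ := dist a.1 b.1 with hdAdef
      set Δ : ℝ := |a.2 - b.2| with hΔdef
      have hCab : coneDist a b = a.2 * dA + Δ := by
        rw [coneDist, hminab]
      have hCzw : coneDist z w = θ * (z.2 * dA + Δ) := by
        rw [coneDist, hmin, hd1, habs]; ring
      have hCab_le : coneDist a b ≤ coneDiam τ := hDle a haτ b hbτ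
      have hdA0 : 0 ≤ dA := dist_nonneg
      have hΔ0 : 0 ≤ Δ := abs_nonneg _
      have hgap : (p j₀).2 - a.2 ≤ rk * a.2 := by
        have hg1 : (p j₀).2 - a.2 ≤ V - v := by linarith
        have hg2 : rk * v ≤ rk * a.2 := mul_le_mul_of_nonneg_left hav hrk0
        linarith
      have hE1 : z.2 * dA ≤ (1 + κ * rk) * (a.2 * dA) := by
        have h3 : ((p j₀).2 - a.2) * dA ≤ (rk * a.2) * dA :=
          mul_le_mul_of_nonneg_right hgap hdA0
        have h4 : z.2 = a.2 + κ * ((p j₀).2 - a.2) := by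
          rw [hz2]
          linear_combination a.2 * hκθ
        calc z.2 * dA = a.2 * dA + κ * (((p j₀).2 - a.2) * dA) := by rw [h4]; ring
          _ ≤ a.2 * dA + κ * ((rk * a.2) * dA) :=
            add_le_add_right (mul_le_mul_of_nonneg_left h3 hκ0) _
          _ = (1 + κ * rk) * (a.2 * dA) := by ring
      have hstep : z.2 * dA + Δ ≤ (1 + κ * rk) * (a.2 * dA + Δ) := by
        nlinarith [mul_nonneg (mul_nonneg hκ0 hrk0) hΔ0]
      calc coneDist z w = θ * (z.2 * dA + Δ) := hCzw
        _ ≤ θ * ((1 + κ * rk) * (a.2 * dA + Δ)) :=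
          mul_le_mul_of_nonneg_left hstep hθ0.le
        _ = (1 - 1 / (((k : ℝ) + 1) ^ 3)) * (a.2 * dA + Δ) := by
          rw [← mul_assoc, hcoef]
        _ = (1 - 1 / (((k : ℝ) + 1) ^ 3)) * coneDist a b := by rw [hCab]
        _ ≤ (1 - 1 / (((k : ℝ) + 1) ^ 3)) * coneDiam τ :=
          mul_le_mul_of_nonneg_left hCab_le hlam0
    -- conclusion
    refine Real.sSup_le ?_ (mul_nonneg hlam0 hD0)
    rintro y ⟨⟨z, w⟩, hzw, rfl⟩
    obtain ⟨hzσ, hwσ⟩ := hzw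
    rcases le_total z.2 w.2 with h | h
    · exact key z w hzσ hwσ h
    · show coneDist z w ≤ _
      rw [coneDist_comm']
      exact key w z hwσ hzσ h
end

section
/- Let X be a simplicial complex, σ ∈ X, and for the barycentric subdivision Sd X define the closed dual cell D(σ,X) = {σ̂₀…σ̂ₖ ∈ Sd X : σ ≤ σ₀ < … < σₖ} and its boundary ∂D(σ,X) = {σ̂₀…σ̂ₖ : σ < σ₀ < … < σₖ}. Then there is a simplicial isomorphism ∂D(σ,X) ≅ Sd(link(σ,X)). -/
/-- for a simplicial complex `X` (a downward closed family of nonempty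
finite vertex sets) and a simplex `σ ∈ X`, the boundary of the closed dual cell
`∂D(σ,X)` is simplicially isomorphic to the barycentric subdivision `Sd(link(σ,X))`.
Since the simplices of `∂D(σ,X)` are the finite chains in the poset
`{τ ∈ X : σ ⊊ τ}` and those of `Sd(link(σ,X))` are the finite chains in the poset of
simplices of `link(σ,X)`, such a simplicial isomorphism is exactly an order isomorphism
of these posets. -/
theorem stmt17 {V : Type} [DecidableEq V] (X : Finset V → Prop)
    (hdown : ∀ s t : Finset V, X t → s ⊆ t → s.Nonempty → X s)
    (σ : Finset V) (hσ : X σ) :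
    Nonempty ({τ : Finset V // X τ ∧ σ ⊂ τ} ≃o
      {τ : Finset V // τ.Nonempty ∧ Disjoint σ τ ∧ X (σ ∪ τ)}) := by
  refine ⟨⟨⟨fun τ => ⟨τ.1 \ σ, ?_, ?_, ?_⟩, fun t => ⟨σ ∪ t.1, ?_, ?_⟩, ?_, ?_⟩, ?_⟩⟩
  · -- nonempty
    obtain ⟨τ, hX, hsub⟩ := τ
    rcases Finset.exists_of_ssubset hsub with ⟨x, hx, hxσ⟩
    exact ⟨x, Finset.mem_sdiff.mpr ⟨hx, hxσ⟩⟩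
  · exact Finset.disjoint_sdiff
  · rw [Finset.union_sdiff_self_eq_union, Finset.union_eq_right.mpr τ.2.2.subset]
    exact τ.2.1
  · exact t.2.2.2
  · refine Finset.ssubset_iff_of_subset Finset.subset_union_left |>.mpr ?_
    obtain ⟨x, hx⟩ := t.2.1
    exact ⟨x, Finset.mem_union_right _ hx, fun hxσ => Finset.disjoint_left.mp t.2.2.1 hxσ hx⟩
  · rintro ⟨τ, hX, hsub⟩
    ext x
    simp only [Finset.mem_union, Finset.mem_sdiff]
    constructor
    · rintro (h | ⟨h, _⟩)
      · exact hsub.subset h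
      · exact h
    · intro h
      by_cases hx : x ∈ σ
      · exact Or.inl hx
      · exact Or.inr ⟨h, hx⟩
  · rintro ⟨t, hne, hdisj, hX⟩
    ext x
    simp only [Finset.mem_sdiff, Finset.mem_union]
    constructor
    · rintro ⟨h | h, hxσ⟩
      · exact absurd h hxσ
      · exact h
    · intro h
      exact ⟨Or.inr h, fun hxσ => Finset.disjoint_left.mp hdisj hxσ h⟩
  · rintro ⟨τ, hX, hsub⟩ ⟨τ', hX', hsub'⟩
    simp only [Equiv.coe_fn_mk, Subtype.mk_le_mk]
    constructor
    · intro h x hx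
      by_cases hxσ : x ∈ σ
      · exact hsub'.subset hxσ
      · exact (Finset.mem_sdiff.mp (h (Finset.mem_sdiff.mpr ⟨hx, hxσ⟩))).1
    · exact fun h => Finset.sdiff_subset_sdiff h le_rfl
end
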